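/- arXiv:1409.2319 — 7 statements merged into one kernel-verified Lean document; each statement's English description precedes it below -/
import Mathlib

section
/- Assume R is F-pure and let 𝔞 be an ideal of R. If 𝔞 is fully Φ(E)-special (that is, for every n ≥ 1, every r ∈ 𝔞 and every e ∈ (0 :_E 𝔞), the element r ⊗ e is zero in R^{(n)} ⊗_R E), then 𝔞 is Φ(E)-special, and an element e of the 0-th component E of Φ(E) satisfies r ⊗ e = 0 in R^{(n)} ⊗_R E for all r ∈ 𝔞 and all n ≥ 0 if and only if e ∈ (0 :_E 𝔞). -/
open TensorProduct IsLocalRing DirectSum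

universe u v

/-! ### Frobenius twists and base change -/

/-- `R` viewed as an algebra over itself via the `n`-th power of the Frobenius
endomorphism; this plays the role of `R^{(n)}` (an `R`-module via `r • s = r ^ p ^ n * s`). -/
def FrobAlg (R : Type u) (p n : ℕ) [CommRing R] [Fact p.Prime] [CharP R p] : Type u := R

namespace FrobAlg

variable (R : Type u) (p n : ℕ) [CommRing R] [Fact p.Prime] [CharP R p]

instance : CommRing (FrobAlg R p n) := inferInstanceAs (CommRing R)

instance : Algebra R (FrobAlg R p n) :=
  RingHom.toAlgebra (show R →+* FrobAlg R p n from (frobenius R p) ^ n)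

/-- The canonical identification of `R` with the underlying set of `R^{(n)}`. -/
def of (r : R) : FrobAlg R p n := r

end FrobAlg

/-- The Frobenius base change `R^{(n)} ⊗_R M` of an `R`-module `M` along the `n`-th
power of the Frobenius endomorphism of `R`. -/
def FrobBC (R : Type u) (p n : ℕ) [CommRing R] [Fact p.Prime] [CharP R p]
    (M : Type v) [AddCommGroup M] [Module R M] : Type (max u v) :=
  FrobAlg R p n ⊗[R] M

namespace FrobBC

variable (R : Type u) (p n : ℕ) [CommRing R] [Fact p.Prime] [CharP R p]
  (M : Type v) [AddCommGroup M] [Module R M]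

noncomputable instance : AddCommGroup (FrobBC R p n M) :=
  inferInstanceAs (AddCommGroup (FrobAlg R p n ⊗[R] M))

/-- The `R`-module structure on `R^{(n)} ⊗_R M` given by multiplication on the first
factor. -/
noncomputable instance : Module R (FrobBC R p n M) :=
  inferInstanceAs (Module (FrobAlg R p n) (FrobAlg R p n ⊗[R] M))

variable {M}

/-- The elementary tensor `r ⊗ m` in `R^{(n)} ⊗_R M`. -/
noncomputable def tmul (r : R) (m : M) : FrobBC R p n M := FrobAlg.of R p n r ⊗ₜ[R] m

end FrobBC

/-- `R` is `F`-pure if for every `R`-module `M` the natural map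
`M → R^{(1)} ⊗_R M`, `m ↦ 1 ⊗ m`, is injective. -/
def IsFPure (R : Type u) (p : ℕ) [CommRing R] [Fact p.Prime] [CharP R p] : Prop :=
  ∀ (M : Type u) [AddCommGroup M] [Module R M],
    Function.Injective fun m : M => FrobBC.tmul R p 1 (1 : R) m

/-- An ideal `𝔞` of `R` is fully `Φ(E)`-special if for every `n ≥ 1`, every `r ∈ 𝔞` and
every `e ∈ (0 :_E 𝔞)`, the element `r ⊗ e` is zero in `R^{(n)} ⊗_R E`. -/
def IsFullyPhiSpecial (R : Type u) (p : ℕ) [CommRing R] [Fact p.Prime] [CharP R p]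
    (E : Type v) [AddCommGroup E] [Module R E] (𝔞 : Ideal R) : Prop :=
  ∀ n : ℕ, 1 ≤ n → ∀ r ∈ 𝔞, ∀ e : E, (∀ a ∈ 𝔞, a • e = 0) → FrobBC.tmul R p n r e = 0

/-! ### The module `Φ(E)` and the Frobenius shift -/

/-- The Frobenius `a ↦ a ^ p`, as an `R`-algebra map `R^{(n)} → R^{(n+1)}`. -/
def frobStepAlg (R : Type u) (p n : ℕ) [CommRing R] [Fact p.Prime] [CharP R p] :
    FrobAlg R p n →ₐ[R] FrobAlg R p (n + 1) :=
  { (show FrobAlg R p n →+* FrobAlg R p (n + 1) from frobenius R p) with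
    commutes' := fun r => by
      show frobenius R p (((frobenius R p) ^ n) r) = ((frobenius R p) ^ (n + 1)) r
      rw [pow_succ']
      rfl }

/-- The Frobenius `a ↦ a ^ p`, as an `R`-linear map `R^{(n)} → R^{(n+1)}`. -/
def frobStep (R : Type u) (p n : ℕ) [CommRing R] [Fact p.Prime] [CharP R p] :
    FrobAlg R p n →ₗ[R] FrobAlg R p (n + 1) :=
  (frobStepAlg R p n).toLinearMap

/-- The graded module `Φ(E) = ⊕_{n ≥ 0} R^{(n)} ⊗_R E`. -/
def PhiModule (R : Type u) (p : ℕ) [CommRing R] [Fact p.Prime] [CharP R p]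
    (E : Type v) [AddCommGroup E] [Module R E] : Type (max u v) :=
  ⨁ n : ℕ, FrobBC R p n E

namespace PhiModule

variable (R : Type u) (p : ℕ) [CommRing R] [Fact p.Prime] [CharP R p]
  (E : Type v) [AddCommGroup E] [Module R E]

noncomputable instance : AddCommGroup (PhiModule R p E) :=
  inferInstanceAs (AddCommGroup (⨁ n : ℕ, FrobBC R p n E))

noncomputable instance : Module R (PhiModule R p E) :=
  inferInstanceAs (Module R (⨁ n : ℕ, FrobBC R p n E))

/-- The inclusion of the `n`-th component into `Φ(E)`. -/
noncomputable def of (n : ℕ) (g : FrobBC R p n E) : PhiModule R p E :=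
  DirectSum.of (fun m : ℕ => FrobBC R p m E) n g

/-- The Frobenius-semilinear shift operator `x` on `Φ(E)`, sending an element
`r ⊗ e` of the `n`-th component to `r ^ p ⊗ e` in the `(n+1)`-th component. -/
noncomputable def shift : PhiModule R p E →+ PhiModule R p E :=
  DirectSum.toAddMonoid fun n =>
    (DirectSum.of (fun m : ℕ => FrobBC R p m E) (n + 1)).comp
      (TensorProduct.map (frobStep R p n) (LinearMap.id (R := R) (M := E))).toAddMonoidHom

end PhiModule

/-- An ideal `𝔞` of `R` is `Φ(E)`-special if it is the annihilator of an
`R[x,f]`-submodule of `Φ(E)`, i.e. of an `R`-submodule stable under the shift operator. -/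
def IsPhiSpecial (R : Type u) (p : ℕ) [CommRing R] [Fact p.Prime] [CharP R p]
    (E : Type v) [AddCommGroup E] [Module R E] (𝔞 : Ideal R) : Prop :=
  ∃ N : Submodule R (PhiModule R p E),
    (∀ g ∈ N, PhiModule.shift R p E g ∈ N) ∧ 𝔞 = N.annihilator

/-! ### Further notions -/

/-- The `q`-th bracket (Frobenius) power `I^{[q]}` of an ideal: the ideal generated by
the `q`-th powers of the elements of `I`. -/
def Ideal.bracketPow {S : Type u} [CommRing S] (I : Ideal S) (q : ℕ) : Ideal S :=
  Ideal.span ((fun x => x ^ q) '' (I : Set S))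

/-- A Noetherian local ring is regular if its maximal ideal can be generated by
`dim S` elements. -/
def IsRegularLocal (S : Type u) [CommRing S] [IsLocalRing S] : Prop :=
  ∃ s : Finset S, (s.card : WithBot (WithTop ℕ)) = ringKrullDim S ∧
    Ideal.span (s : Set S) = maximalIdeal S

/-- An ideal `𝔟` of `R` is uniformly `F`-compatible if for every `n ≥ 1` and every
`R`-linear map `φ : R^{(n)} → R` one has `φ(𝔟) ⊆ 𝔟`. -/
def UniformlyFCompatible (R : Type u) (p : ℕ) [CommRing R] [Fact p.Prime] [CharP R p]
    (𝔟 : Ideal R) : Prop :=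
  ∀ n : ℕ, 1 ≤ n → ∀ φ : FrobAlg R p n →ₗ[R] R, ∀ b ∈ 𝔟, φ (FrobAlg.of R p n b) ∈ 𝔟

/-- `R` is `F`-finite if `R^{(1)}` is a finitely generated `R`-module. -/
def IsFFinite (R : Type u) (p : ℕ) [CommRing R] [Fact p.Prime] [CharP R p] : Prop :=
  Module.Finite R (FrobAlg R p 1)

/-- A Noetherian local ring `T` of characteristic `p` is strongly `F`-regular in the
sense of Lyubeznik and Smith if the tight closure of `0` in the injective envelope of
the residue field of `T` is zero. -/
def IsStronglyFRegularLS (T : Type u) (p : ℕ) [CommRing T] [IsLocalRing T]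
    [Fact p.Prime] [CharP T p] : Prop :=
  ∀ (ET : Type u) [AddCommGroup ET] [Module T ET],
    Module.Injective T ET →
    ∀ ι : (T ⧸ maximalIdeal T) →ₗ[T] ET, Function.Injective ι →
    (∀ N : Submodule T ET, N ⊓ LinearMap.range ι = ⊥ → N = ⊥) →
    ∀ m : ET,
      (∃ c : T, (∀ P ∈ minimalPrimes T, c ∉ P) ∧
        ∃ N₀ : ℕ, ∀ n : ℕ, N₀ ≤ n → FrobBC.tmul T p n c m = 0) → m = 0

/-- `Q` is a minimal primary decomposition of the ideal `𝔄`: the `Q i` are primary,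
`𝔄` is their intersection, their radicals are pairwise distinct, and none of them
contains the intersection of the others. -/
def IsMinimalPrimaryDecomposition {S : Type u} [CommRing S] (𝔄 : Ideal S) {t : ℕ}
    (Q : Fin t → Ideal S) : Prop :=
  𝔄 = ⨅ i, Q i ∧ (∀ i, (Q i).IsPrimary) ∧
    (Function.Injective fun i => (Q i).radical) ∧
    ∀ i, ¬ (⨅ j, ⨅ (_ : j ≠ i), Q j) ≤ Q i

section Aux
variable {R : Type u} [CommRing R] {p : ℕ} [Fact p.Prime] [CharP R p]
  {E : Type u} [AddCommGroup E] [Module R E]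

lemma frob_pow_zero (r : R) : ((frobenius R p) ^ 0) r = r := by
  rw [pow_zero]; rfl

lemma FrobBC.smul_tmul_eq (n : ℕ) (c r : R) (e : E) :
    c • FrobBC.tmul R p n r e = FrobBC.tmul R p n (c * r) e := by
  show (FrobAlg.of R p n c) • (FrobAlg.of R p n r ⊗ₜ[R] e)
      = FrobAlg.of R p n (c * r) ⊗ₜ[R] e
  rw [TensorProduct.smul_tmul']
  rfl

lemma FrobBC.tmul_zero_right (n : ℕ) (r : R) : FrobBC.tmul R p n r (0 : E) = 0 := by
  show FrobAlg.of R p n r ⊗ₜ[R] (0 : E) = 0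
  exact TensorProduct.tmul_zero _ _

lemma FrobBC.tmul0 (r : R) (e : E) :
    FrobBC.tmul R p 0 r e = FrobBC.tmul R p 0 1 (r • e) := by
  show FrobAlg.of R p 0 r ⊗ₜ[R] e = FrobAlg.of R p 0 1 ⊗ₜ[R] (r • e)
  rw [← TensorProduct.smul_tmul]
  congr 1
  show FrobAlg.of R p 0 r = r • (1 : FrobAlg R p 0)
  rw [Algebra.smul_def, RingHom.algebraMap_toAlgebra, mul_one]
  exact (frob_pow_zero r).symm
end Aux
noncomputable def ev0 (R : Type u) [CommRing R] (p : ℕ) [Fact p.Prime] [CharP R p]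
    (E : Type u) [AddCommGroup E] [Module R E] : FrobAlg R p 0 ⊗[R] E →ₗ[R] E :=
  TensorProduct.lift
    { toFun := fun r =>
        { toFun := fun e => (show R from r) • e
          map_add' := fun e₁ e₂ => smul_add _ _ _
          map_smul' := fun a e => smul_comm _ a e }
      map_add' := fun a b => by
        ext e
        exact add_smul (show R from a) (show R from b) e
      map_smul' := fun c r => by
        ext e
        show (show R from (c • r : FrobAlg R p 0)) • e = c • ((show R from r) • e)
        have h : (show R from (c • r : FrobAlg R p 0)) = c * (show R from r) := by
          show ((frobenius R p) ^ 0) c * (show R from r) = c * (show R from r)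
          rw [frob_pow_zero]
        rw [h, mul_smul] }

section Aux2
variable {R : Type u} [CommRing R] {p : ℕ} [Fact p.Prime] [CharP R p]
  {E : Type u} [AddCommGroup E] [Module R E]

lemma ev0_tmul (r : R) (e : E) : ev0 R p E (FrobBC.tmul R p 0 r e) = r • e := by
  show ev0 R p E (FrobAlg.of R p 0 r ⊗ₜ[R] e) = r • e
  rw [ev0, TensorProduct.lift.tmul]
  rfl

lemma FrobBC.smul_def' (n : ℕ) (c : R) (y : FrobBC R p n E) :
    c • y = @HSMul.hSMul (FrobAlg R p n) (FrobAlg R p n ⊗[R] E) (FrobAlg R p n ⊗[R] E) _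
      (FrobAlg.of R p n c) y := rfl

lemma PhiModule.of_smul (n : ℕ) (c : R) (y : FrobBC R p n E) :
    PhiModule.of R p E n (c • y) = c • PhiModule.of R p E n y :=
  DirectSum.of_smul _ _ _ _

lemma frobStep_apply (n : ℕ) (r : FrobAlg R p n) :
    frobStep R p n r = (show FrobAlg R p (n+1) from frobenius R p r) := rfl

lemma shift_of (n : ℕ) (y : FrobBC R p n E) :
    PhiModule.shift R p E (PhiModule.of R p E n y)
      = PhiModule.of R p E (n+1)
          (TensorProduct.map (frobStep R p n) (LinearMap.id (R := R) (M := E)) y) :=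
  DirectSum.toAddMonoid_of _ _ _

lemma map_frob_smul' (n : ℕ) (c : FrobAlg R p n) (y : FrobAlg R p n ⊗[R] E) :
    TensorProduct.map (frobStep R p n) (LinearMap.id (R := R) (M := E)) (c • y)
      = frobStep R p n c •
          TensorProduct.map (frobStep R p n) (LinearMap.id (R := R) (M := E)) y := by
  induction y using TensorProduct.induction_on with
  | zero => simp
  | tmul r e =>
      rw [TensorProduct.smul_tmul', TensorProduct.map_tmul, TensorProduct.map_tmul,
        TensorProduct.smul_tmul', smul_eq_mul, smul_eq_mul,
        show frobStep R p n (c * r) = frobStep R p n c * frobStep R p n r from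
          map_mul (frobStepAlg R p n) c r]
  | add a b ha hb =>
      rw [smul_add, map_add, ha, hb, map_add, smul_add]

lemma shift_smul (c : R) (g : PhiModule R p E) :
    PhiModule.shift R p E (c • g) = c ^ p • PhiModule.shift R p E g := by
  refine DirectSum.induction_on g ?_ ?_ ?_
  · change PhiModule.shift R p E (c • (0 : PhiModule R p E))
      = c ^ p • PhiModule.shift R p E (0 : PhiModule R p E)
    simp
  · intro n y
    show PhiModule.shift R p E (c • PhiModule.of R p E n y)
      = c ^ p • PhiModule.shift R p E (PhiModule.of R p E n y)
    have hc : frobStep R p n (FrobAlg.of R p n c) = FrobAlg.of R p (n+1) (c ^ p) := rfl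
    rw [← PhiModule.of_smul, shift_of, shift_of, FrobBC.smul_def', map_frob_smul' n (FrobAlg.of R p n c) y, hc,
      ← FrobBC.smul_def' (n+1) (c ^ p)
        (TensorProduct.map (frobStep R p n) (LinearMap.id (R := R) (M := E)) y)]
    exact PhiModule.of_smul (n+1) (c ^ p) _
  · intro a b ha hb
    change PhiModule R p E at a b
    change PhiModule.shift R p E (c • ((a : PhiModule R p E) + b))
      = c ^ p • PhiModule.shift R p E ((a : PhiModule R p E) + b)
    rw [smul_add, map_add, ha, hb, map_add, smul_add]
end Aux2
lemma mem_of_ann_socle {R : Type u} [CommRing R] [IsLocalRing R]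
    {E : Type u} [AddCommGroup E] [Module R E]
    (hE : Module.Injective R E)
    (ι : (R ⧸ maximalIdeal R) →ₗ[R] E) (hι : Function.Injective ι)
    (𝔞 : Ideal R) (s : R)
    (hs : ∀ e : E, (∀ a ∈ 𝔞, a • e = 0) → s • e = 0) : s ∈ 𝔞 := by
  by_contra hns
  set g : R →ₗ[R] R ⧸ 𝔞 := LinearMap.toSpanSingleton R (R ⧸ 𝔞) (Ideal.Quotient.mk 𝔞 s) with hg
  have hg1 : g 1 = Ideal.Quotient.mk 𝔞 s := by
    rw [hg, LinearMap.toSpanSingleton_apply, one_smul]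
  have hker : LinearMap.ker g ≤ maximalIdeal R := by
    apply IsLocalRing.le_maximalIdeal
    intro htop
    have h1 : (1 : R) ∈ LinearMap.ker g := htop ▸ Submodule.mem_top
    rw [LinearMap.mem_ker, hg1, Ideal.Quotient.eq_zero_iff_mem] at h1
    exact hns h1
  have hkerq : LinearMap.ker g ≤ LinearMap.ker (maximalIdeal R).mkQ := by
    rw [Submodule.ker_mkQ]; exact hker
  set q : (R ⧸ LinearMap.ker g) →ₗ[R] R ⧸ maximalIdeal R :=
    Submodule.liftQ (LinearMap.ker g) (maximalIdeal R).mkQ hkerq with hq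
  set f : (LinearMap.range g : Submodule R (R ⧸ 𝔞)) →ₗ[R] E :=
    ι ∘ₗ q ∘ₗ (g.quotKerEquivRange.symm : (LinearMap.range g) →ₗ[R] (R ⧸ LinearMap.ker g)) with hf
  obtain ⟨ψ, hψ⟩ := hE.out (LinearMap.range g).subtype (Submodule.injective_subtype _) f
  set e : E := ψ (Ideal.Quotient.mk 𝔞 1) with he
  have hA : ∀ a ∈ 𝔞, a • e = 0 := by
    intro a ha
    have h1 : a • (Ideal.Quotient.mk 𝔞 1 : R ⧸ 𝔞) = Ideal.Quotient.mk 𝔞 a := by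
      show a • (Submodule.Quotient.mk (1:R) : R ⧸ 𝔞) = Submodule.Quotient.mk a
      rw [← Submodule.Quotient.mk_smul, smul_eq_mul, mul_one]
    rw [he, ← map_smul, h1, Ideal.Quotient.eq_zero_iff_mem.mpr ha, map_zero]
  have hse := hs e hA
  have hmem : Ideal.Quotient.mk 𝔞 s ∈ LinearMap.range g := ⟨1, hg1⟩
  have hs1 : s • (Ideal.Quotient.mk 𝔞 1 : R ⧸ 𝔞) = Ideal.Quotient.mk 𝔞 s := by
    show s • (Submodule.Quotient.mk (1:R) : R ⧸ 𝔞) = Submodule.Quotient.mk s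
    rw [← Submodule.Quotient.mk_smul, smul_eq_mul, mul_one]
  have hse2 : s • e = ψ (Ideal.Quotient.mk 𝔞 s) := by
    rw [he, ← map_smul, hs1]
  have hsub : (LinearMap.range g).subtype ⟨Ideal.Quotient.mk 𝔞 s, hmem⟩
      = Ideal.Quotient.mk 𝔞 s := rfl
  have hval : ψ (Ideal.Quotient.mk 𝔞 s) = f ⟨Ideal.Quotient.mk 𝔞 s, hmem⟩ :=
    hψ ⟨Ideal.Quotient.mk 𝔞 s, hmem⟩
  have hsym : g.quotKerEquivRange.symm ⟨Ideal.Quotient.mk 𝔞 s, hmem⟩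
      = Submodule.Quotient.mk (1:R) := by
    have h2 : (⟨Ideal.Quotient.mk 𝔞 s, hmem⟩ : LinearMap.range g)
        = ⟨g 1, LinearMap.mem_range_self g 1⟩ := by
      ext; exact hg1.symm
    rw [h2, g.quotKerEquivRange_symm_apply_image 1]
    rfl
  have hfval : f ⟨Ideal.Quotient.mk 𝔞 s, hmem⟩ = ι ((maximalIdeal R).mkQ 1) := by
    rw [hf]
    simp only [LinearMap.comp_apply, LinearEquiv.coe_coe]
    rw [hsym, hq, Submodule.liftQ_apply]
  have hne : ι ((maximalIdeal R).mkQ 1) ≠ 0 := by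
    intro h0
    have h1 : (maximalIdeal R).mkQ 1 = 0 := hι (h0.trans (map_zero ι).symm)
    rw [Submodule.mkQ_apply, Submodule.Quotient.mk_eq_zero] at h1
    exact (IsLocalRing.maximalIdeal.isMaximal R).ne_top ((Ideal.eq_top_iff_one _).mpr h1)
  exact hne (by rw [← hfval, ← hval, ← hse2, hse])
section Aux3
variable {R : Type u} [CommRing R] {p : ℕ} [Fact p.Prime] [CharP R p]
  {E : Type u} [AddCommGroup E] [Module R E]

lemma map_frob_tmul (n : ℕ) (r : R) (e : E) :
    TensorProduct.map (frobStep R p n) (LinearMap.id (R := R) (M := E))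
      (FrobBC.tmul R p n r e) = FrobBC.tmul R p (n+1) (r ^ p) e := by
  show TensorProduct.map (frobStep R p n) (LinearMap.id (R := R) (M := E))
      (FrobAlg.of R p n r ⊗ₜ[R] e) = FrobAlg.of R p (n+1) (r ^ p) ⊗ₜ[R] e
  rw [TensorProduct.map_tmul]
  rfl

lemma PhiModule.of_zero (n : ℕ) : PhiModule.of R p E n (0 : FrobBC R p n E) = 0 :=
  map_zero _
end Aux3

theorem fully_special_implies_special_and_component (R : Type u) [CommRing R] [IsNoetherianRing R] [IsLocalRing R]
    (p : ℕ) [Fact p.Prime] [CharP R p]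
    (E : Type u) [AddCommGroup E] [Module R E]
    (hE : Module.Injective R E)
    (ι : (R ⧸ maximalIdeal R) →ₗ[R] E) (hι : Function.Injective ι)
    (hess : ∀ N : Submodule R E, N ⊓ LinearMap.range ι = ⊥ → N = ⊥)
    (hFpure : IsFPure R p)
    (𝔞 : Ideal R) (h𝔞 : IsFullyPhiSpecial R p E 𝔞) :
    IsPhiSpecial R p E 𝔞 ∧
      ∀ e : E, (∀ n : ℕ, ∀ r ∈ 𝔞, FrobBC.tmul R p n r e = 0) ↔ ∀ a ∈ 𝔞, a • e = 0 := by
  have comp : ∀ e : E, (∀ n : ℕ, ∀ r ∈ 𝔞, FrobBC.tmul R p n r e = 0) ↔ ∀ a ∈ 𝔞, a • e = 0 := by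
    intro e
    constructor
    · intro h a ha
      have h0 := congrArg (ev0 R p E) (h 0 a ha)
      rw [ev0_tmul] at h0
      exact h0.trans (map_zero (ev0 R p E))
    · intro hA n r hr
      cases n with
      | zero => rw [FrobBC.tmul0, hA r hr, FrobBC.tmul_zero_right]
      | succ m => exact h𝔞 (m+1) (Nat.succ_le_succ (Nat.zero_le m)) r hr e hA
  refine ⟨?_, comp⟩
  set S : Set (PhiModule R p E) :=
    {g | ∃ n : ℕ, ∃ e : E, (∀ a ∈ 𝔞, a • e = 0) ∧
      g = PhiModule.of R p E n (FrobBC.tmul R p n 1 e)} with hS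
  refine ⟨Submodule.span R S, ?_, ?_⟩
  · intro g hg
    induction hg using Submodule.span_induction with
    | mem x hx =>
        obtain ⟨n, e, he, rfl⟩ := hx
        rw [shift_of, map_frob_tmul, one_pow]
        exact Submodule.subset_span ⟨n+1, e, he, rfl⟩
    | zero => rw [map_zero]; exact Submodule.zero_mem _
    | add x y hx hy ihx ihy => rw [map_add]; exact Submodule.add_mem _ ihx ihy
    | smul c x hx ih => rw [shift_smul]; exact Submodule.smul_mem _ _ ih
  · apply le_antisymm
    · intro a ha
      rw [Submodule.mem_annihilator]
      intro g hg
      induction hg using Submodule.span_induction with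
      | mem x hx =>
          obtain ⟨n, e, he, rfl⟩ := hx
          rw [← PhiModule.of_smul, FrobBC.smul_tmul_eq, mul_one]
          cases n with
          | zero =>
              rw [FrobBC.tmul0, he a ha, FrobBC.tmul_zero_right, PhiModule.of_zero]
          | succ m =>
              rw [h𝔞 (m+1) (Nat.succ_le_succ (Nat.zero_le m)) a ha e he, PhiModule.of_zero]
      | zero => rw [smul_zero]
      | add x y hx hy ihx ihy => rw [smul_add, ihx, ihy, add_zero]
      | smul c x hx ih => rw [smul_comm, ih, smul_zero]
    · intro t ht
      rw [Submodule.mem_annihilator] at ht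
      apply mem_of_ann_socle hE ι hι 𝔞 t
      intro e he
      have h0 := ht _ (Submodule.subset_span (⟨0, e, he, rfl⟩ :
        PhiModule.of R p E 0 (FrobBC.tmul R p 0 1 e) ∈ S))
      rw [← PhiModule.of_smul, FrobBC.smul_tmul_eq, mul_one] at h0
      have hz : FrobBC.tmul R p 0 t e = 0 := by
        apply DirectSum.of_injective (β := fun m : ℕ => FrobBC R p m E) 0
        rw [map_zero]
        exact h0
      have h1 := congrArg (ev0 R p E) hz
      rw [ev0_tmul] at h1
      exact h1.trans (map_zero (ev0 R p E))
end

section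
/- Suppose R is 𝔪-adically complete and F-pure. Then every Φ(E)-special ideal of R is fully Φ(E)-special. -/
open TensorProduct IsLocalRing DirectSum

universe u v

set_option linter.unusedVariables false
set_option linter.unusedSectionVars false
set_option maxHeartbeats 1000000

section AuxMatlis
variable {R : Type u} [CommRing R] [IsNoetherianRing R] [IsLocalRing R]
variable {E : Type u} [AddCommGroup E] [Module R E]

theorem cogen (hE : Module.Injective R E) (ι : (R ⧸ maximalIdeal R) →ₗ[R] E)
    (hι : Function.Injective ι) {M : Type u} [AddCommGroup M] [Module R M]
    (z : M) (hz : z ≠ 0) : ∃ φ : M →ₗ[R] E, φ z ≠ 0 := by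
  set J : Ideal R := LinearMap.ker (LinearMap.toSpanSingleton R M z) with hJ
  have hJtop : J ≠ ⊤ := by
    intro h
    have h1 : (1 : R) ∈ J := h ▸ Submodule.mem_top
    rw [hJ, LinearMap.mem_ker, LinearMap.toSpanSingleton_apply, one_smul] at h1
    exact hz h1
  have hJm : J ≤ maximalIdeal R := le_maximalIdeal hJtop
  have hker : J ≤ LinearMap.ker (ι ∘ₗ (maximalIdeal R).mkQ) := by
    intro x hx
    have hx0 : ((Submodule.Quotient.mk x : R ⧸ maximalIdeal R)) = 0 :=
      (Submodule.Quotient.mk_eq_zero _).mpr (hJm hx)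
    show ι ((maximalIdeal R).mkQ x) = 0
    rw [Submodule.mkQ_apply, hx0, map_zero]
  set g : (R ⧸ J) →ₗ[R] E := Submodule.liftQ J (ι ∘ₗ (maximalIdeal R).mkQ) hker with hg
  set j : (R ⧸ J) →ₗ[R] M := Submodule.liftQ J (LinearMap.toSpanSingleton R M z) le_rfl with hj
  have hjinj : Function.Injective j := by
    rw [← LinearMap.ker_eq_bot, hj, Submodule.ker_liftQ_eq_bot]
    exact hJ.ge
  obtain ⟨h, hh⟩ := hE.out j hjinj g
  refine ⟨h, ?_⟩
  have h1 : j (Submodule.Quotient.mk 1) = z := by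
    rw [hj, Submodule.liftQ_apply, LinearMap.toSpanSingleton_apply, one_smul]
  have h2 : h z = ι (Submodule.Quotient.mk 1) := by
    rw [← h1, hh, hg, Submodule.liftQ_apply]
    rfl
  rw [h2]
  intro h0
  have hmk : (Submodule.Quotient.mk (1:R) : R ⧸ maximalIdeal R) = 0 := by
    apply hι; simpa using h0
  rw [Submodule.Quotient.mk_eq_zero] at hmk
  exact (maximalIdeal R).ne_top_iff_one.mp (Ideal.IsMaximal.ne_top inferInstance) hmk

theorem eq_zero_of_forall (hE : Module.Injective R E) (ι : (R ⧸ maximalIdeal R) →ₗ[R] E)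
    (hι : Function.Injective ι) {M : Type u} [AddCommGroup M] [Module R M]
    (z : M) (h : ∀ φ : M →ₗ[R] E, φ z = 0) : z = 0 := by
  by_contra hz
  obtain ⟨φ, hφ⟩ := cogen hE ι hι z hz
  exact hφ (h φ)


/-- the socle of `E` is the image of `ι`. -/
theorem socle_eq (ι : (R ⧸ maximalIdeal R) →ₗ[R] E) (hι : Function.Injective ι)
    (hess : ∀ N : Submodule R E, N ⊓ LinearMap.range ι = ⊥ → N = ⊥)
    (e : E) (he : ∀ a ∈ maximalIdeal R, a • e = 0) : e ∈ LinearMap.range ι := by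
  rcases eq_or_ne e 0 with rfl | hne
  · exact zero_mem _
  have hspan : Submodule.span R {e} ⊓ LinearMap.range ι ≠ ⊥ := by
    intro h0
    have := hess _ h0
    rw [Submodule.span_singleton_eq_bot] at this
    exact hne this
  obtain ⟨w, hw, hwne⟩ := Submodule.exists_mem_ne_zero_of_ne_bot hspan
  obtain ⟨hw1, v, hv⟩ := hw
  obtain ⟨c, hc⟩ := Submodule.mem_span_singleton.mp hw1
  -- w = c • e, w = ι v, v = mk s
  obtain ⟨s, rfl⟩ := Submodule.Quotient.mk_surjective _ v
  -- w = s • ι 1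
  have hmk : s • (Submodule.Quotient.mk (1:R) : R ⧸ maximalIdeal R)
      = Submodule.Quotient.mk s := by
    rw [← Submodule.Quotient.mk_smul, smul_eq_mul, mul_one]
  have hw2 : w = s • ι (Submodule.Quotient.mk 1) := by
    rw [← map_smul, hmk, hv]
  -- s is a unit
  have hs : IsUnit s := by
    by_contra hsu
    have : (Submodule.Quotient.mk s : R ⧸ maximalIdeal R) = 0 :=
      (Submodule.Quotient.mk_eq_zero _).mpr hsu
    rw [← hv, this, map_zero] at hwne
    exact hwne rfl
  have hcu : IsUnit c := by
    by_contra hcu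
    exact hwne (by rw [← hc]; exact he c hcu)
  obtain ⟨cu, rfl⟩ := hcu
  refine ⟨(↑cu⁻¹ * s) • Submodule.Quotient.mk 1, ?_⟩
  rw [map_smul, mul_smul, ← hw2, ← hc, smul_smul, Units.inv_mul, one_smul]

/-- division in the one-dimensional socle -/
theorem socle_div (ι : (R ⧸ maximalIdeal R) →ₗ[R] E) (hι : Function.Injective ι)
    (v w : E) (hv : v ∈ LinearMap.range ι) (hw : w ∈ LinearMap.range ι) (hwne : w ≠ 0) :
    ∃ c : R, v = c • w := by
  obtain ⟨x, hx⟩ := hv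
  obtain ⟨y, hy⟩ := hw
  obtain ⟨s, rfl⟩ := Submodule.Quotient.mk_surjective _ y
  obtain ⟨t, rfl⟩ := Submodule.Quotient.mk_surjective _ x
  have hs : IsUnit s := by
    by_contra hsu
    have h0 : (Submodule.Quotient.mk s : R ⧸ maximalIdeal R) = 0 :=
      (Submodule.Quotient.mk_eq_zero _).mpr hsu
    rw [h0, map_zero] at hy
    exact hwne hy.symm
  obtain ⟨su, rfl⟩ := hs
  refine ⟨t * ↑su⁻¹, ?_⟩
  rw [← hx, ← hy, ← map_smul]
  congr 1
  rw [← Submodule.Quotient.mk_smul, smul_eq_mul, mul_assoc, Units.inv_mul, mul_one]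

/-- every element of E is killed by a power of the maximal ideal -/
theorem torsion (ι : (R ⧸ maximalIdeal R) →ₗ[R] E) (hι : Function.Injective ι)
    (hess : ∀ N : Submodule R E, N ⊓ LinearMap.range ι = ⊥ → N = ⊥)
    (e : E) : ∃ t : ℕ, ∀ a ∈ (maximalIdeal R) ^ t, a • e = 0 := by
  -- step 1: each element of the maximal ideal is locally nilpotent on e
  have key : ∀ a ∈ maximalIdeal R, ∃ k : ℕ, (a ^ k) • e = 0 := by
    intro a ha
    have hmono : Monotone (fun j => LinearMap.ker (LinearMap.toSpanSingleton R E ((a ^ j) • e))) := by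
      intro i j hij r hr
      rw [LinearMap.mem_ker, LinearMap.toSpanSingleton_apply] at hr ⊢
      obtain ⟨d, rfl⟩ := Nat.exists_eq_add_of_le hij
      rw [pow_add, mul_comm, mul_smul, smul_comm, hr, smul_zero]
    set f : ℕ →o Ideal R :=
      ⟨fun j => LinearMap.ker (LinearMap.toSpanSingleton R E ((a ^ j) • e)), hmono⟩ with hf
    obtain ⟨k, hk⟩ := monotone_stabilizes_iff_noetherian.mpr inferInstance f
    refine ⟨k, ?_⟩
    by_contra hne
    have hspan : Submodule.span R {(a ^ k) • e} ⊓ LinearMap.range ι ≠ ⊥ := by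
      intro h0
      have := hess _ h0
      rw [Submodule.span_singleton_eq_bot] at this
      exact hne this
    obtain ⟨w, hw, hwne⟩ := Submodule.exists_mem_ne_zero_of_ne_bot hspan
    obtain ⟨hw1, hw2⟩ := hw
    obtain ⟨s, hc⟩ := Submodule.mem_span_singleton.mp hw1
    -- a • w = 0 since w ∈ range ι
    have haw : a • w = 0 := by
      obtain ⟨v, hv⟩ := hw2
      obtain ⟨x, rfl⟩ := Submodule.Quotient.mk_surjective _ v
      have : a • (Submodule.Quotient.mk x : R ⧸ maximalIdeal R) = 0 := by
        rw [← Submodule.Quotient.mk_smul, Submodule.Quotient.mk_eq_zero]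
        exact Ideal.mul_mem_right x _ ha
      rw [← hv, ← map_smul, this, map_zero]
    -- so s ∈ f (k+1) = f k, hence w = 0
    have hs1 : s ∈ f (k + 1) := by
      show s • (a ^ (k+1)) • e = 0
      rw [pow_succ, mul_smul, smul_comm (a ^ k) a, smul_comm s a, hc, haw]
    have hs0 : s ∈ f k := by rw [hk (k+1) (Nat.le_succ k)]; exact hs1
    have : s • (a ^ k) • e = 0 := hs0
    rw [hc] at this
    exact hwne this
  -- step 2: maximal ideal ≤ radical of the annihilator ideal
  set J : Ideal R := LinearMap.ker (LinearMap.toSpanSingleton R E e) with hJ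
  have hrad : maximalIdeal R ≤ J.radical := by
    intro a ha
    obtain ⟨k, hk⟩ := key a ha
    exact ⟨k, by rw [hJ]; exact hk⟩
  obtain ⟨t, ht⟩ := Ideal.exists_radical_pow_le_of_fg J (IsNoetherian.noetherian _)
  refine ⟨t, fun b hb => ?_⟩
  have : b ∈ J := ht (Ideal.pow_right_mono hrad t hb)
  exact this

theorem annih_into (hE : Module.Injective R E) (ι : (R ⧸ maximalIdeal R) →ₗ[R] E)
    (hι : Function.Injective ι) (𝔟 : Ideal R) (s : R)
    (h : ∀ z : E, (∀ b ∈ 𝔟, b • z = 0) → s • z = 0) : s ∈ 𝔟 := by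
  by_contra hs
  have hne : (Submodule.Quotient.mk s : R ⧸ 𝔟) ≠ 0 := by
    rw [Ne, Submodule.Quotient.mk_eq_zero]; exact hs
  -- cogen is proved earlier; restate here
  obtain ⟨φ, hφ⟩ := cogen hE ι hι (M := R ⧸ 𝔟) (Submodule.Quotient.mk s) hne
  have hmk : ∀ r : R, r • (Submodule.Quotient.mk (1:R) : R ⧸ 𝔟) = Submodule.Quotient.mk r := by
    intro r; rw [← Submodule.Quotient.mk_smul, smul_eq_mul, mul_one]
  have hz : ∀ b ∈ 𝔟, b • φ (Submodule.Quotient.mk 1) = 0 := by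
    intro b hb
    rw [← map_smul, hmk, (Submodule.Quotient.mk_eq_zero _).mpr hb, map_zero]
  have := h (φ (Submodule.Quotient.mk 1)) hz
  rw [← map_smul, hmk] at this
  exact hφ this

theorem funct_span (ι : (R ⧸ maximalIdeal R) →ₗ[R] E) (hι : Function.Injective ι) (d : ℕ) :
    ∀ {M : Type u} [AddCommGroup M] [Module R M] (μ : Fin d → (M →ₗ[R] E)) (τ : M →ₗ[R] E),
    (∀ i x, μ i x ∈ LinearMap.range ι) → (∀ x, τ x ∈ LinearMap.range ι) →
    (∀ x, (∀ i, μ i x = 0) → τ x = 0) →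
    ∃ c : Fin d → R, ∀ x, τ x = ∑ i, c i • μ i x := by
  induction d with
  | zero =>
    intro M _ _ μ τ hμ hτ hvan
    exact ⟨Fin.elim0, fun x => by simpa using hvan x (fun i => i.elim0)⟩
  | succ d ih =>
    intro M _ _ μ τ hμ hτ hvan
    set K := LinearMap.ker (μ (Fin.last d)) with hK
    obtain ⟨c, hc⟩ := ih (fun i : Fin d => (μ i.castSucc).comp K.subtype)
      (τ.comp K.subtype) (fun i x => hμ _ _) (fun x => hτ _)
      (by
        intro x hx
        apply hvan
        intro i
        rcases Fin.eq_castSucc_or_eq_last i with ⟨j, rfl⟩ | rfl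
        · exact hx j
        · exact x.2)
    set ρ : M →ₗ[R] E := τ - ∑ i : Fin d, c i • μ i.castSucc with hρ
    have hρapp : ∀ x, ρ x = τ x - ∑ i : Fin d, c i • μ i.castSucc x := by
      intro x; simp [hρ]
    have hρK : ∀ x ∈ K, ρ x = 0 := by
      intro x hx
      rw [hρapp]
      have := hc ⟨x, hx⟩
      simp only [LinearMap.comp_apply, Submodule.subtype_apply] at this
      rw [this]
      simp
    have hρrange : ∀ x, ρ x ∈ LinearMap.range ι := by
      intro x
      rw [hρapp]
      exact Submodule.sub_mem _ (hτ x)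
        (Submodule.sum_mem _ (fun i _ => Submodule.smul_mem _ _ (hμ _ _)))
    by_cases hex : ∃ z₀, μ (Fin.last d) z₀ ≠ 0
    · obtain ⟨z₀, hz₀⟩ := hex
      obtain ⟨c', hc'⟩ := socle_div ι hι (ρ z₀) (μ (Fin.last d) z₀)
        (hρrange z₀) (hμ _ z₀) hz₀
      refine ⟨Fin.snoc c c', fun x => ?_⟩
      obtain ⟨cx, hcx⟩ := socle_div ι hι (μ (Fin.last d) x) (μ (Fin.last d) z₀)
        (hμ _ x) (hμ _ z₀) hz₀
      have hxk : x - cx • z₀ ∈ K := by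
        rw [hK, LinearMap.mem_ker, map_sub, map_smul, hcx, sub_self]
      have h1 : ρ x = cx • ρ z₀ := by
        have h0 := hρK _ hxk
        rw [map_sub, map_smul, sub_eq_zero] at h0
        exact h0
      have h2 : ρ x = c' • μ (Fin.last d) x := by
        rw [h1, hc', hcx, smul_comm]
      have h3 : τ x = ∑ i : Fin d, c i • μ i.castSucc x + c' • μ (Fin.last d) x := by
        have h4 := (hρapp x).symm.trans h2
        rw [sub_eq_iff_eq_add] at h4
        rw [h4, add_comm]
      rw [h3, Fin.sum_univ_castSucc]
      congr 1
      · exact Finset.sum_congr rfl (fun i _ => by rw [Fin.snoc_castSucc])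
      · rw [Fin.snoc_last]
    · push_neg at hex
      refine ⟨Fin.snoc c 0, fun x => ?_⟩
      have hxK : x ∈ K := by rw [hK, LinearMap.mem_ker]; exact hex x
      have h0 : ρ x = 0 := hρK x hxK
      rw [hρapp, sub_eq_zero] at h0
      rw [h0, Fin.sum_univ_castSucc, Fin.snoc_last, zero_smul, add_zero]
      exact Finset.sum_congr rfl (fun i _ => by rw [Fin.snoc_castSucc])

variable (R E) in
/-- the submodule of elements killed by the `t`-th power of the maximal ideal -/
def tors (t : ℕ) : Submodule R E where
  carrier := {z | ∀ a ∈ (maximalIdeal R) ^ t, a • z = 0}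
  add_mem' := fun hz hw => fun a ha => by rw [smul_add, hz a ha, hw a ha, add_zero]
  zero_mem' := fun a ha => smul_zero a
  smul_mem' := fun c z hz => fun a ha => by rw [smul_comm, hz a ha, smul_zero]

theorem mem_tors {t : ℕ} {z : E} : z ∈ tors R E t ↔ ∀ a ∈ (maximalIdeal R) ^ t, a • z = 0 :=
  Iff.rfl

theorem tors_mono {m n : ℕ} (h : m ≤ n) : tors R E m ≤ tors R E n := by
  intro z hz a ha
  exact hz a (Ideal.pow_le_pow_right h ha)

theorem mult_on_tors (hE : Module.Injective R E) (ι : (R ⧸ maximalIdeal R) →ₗ[R] E)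
    (hι : Function.Injective ι)
    (hess : ∀ N : Submodule R E, N ⊓ LinearMap.range ι = ⊥ → N = ⊥)
    (φ : E →ₗ[R] E) (t : ℕ) : ∃ r : R, ∀ z ∈ tors R E t, φ z = r • z := by
  induction t with
  | zero =>
    refine ⟨0, fun z hz => ?_⟩
    have h1 : (1 : R) ∈ (maximalIdeal R) ^ 0 := by rw [pow_zero, Ideal.one_eq_top]; trivial
    have := hz 1 h1
    rw [one_smul] at this
    rw [this, map_zero, smul_zero]
  | succ t ih =>
    obtain ⟨r, hr⟩ := ih
    obtain ⟨s, hs⟩ := IsNoetherian.noetherian ((maximalIdeal R) ^ t)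
    set d := s.card with hd
    set a : Fin d → R := fun i => (s.equivFin.symm i : R) with ha
    have hasub : ∀ i, a i ∈ (maximalIdeal R) ^ t := by
      intro i
      rw [← hs]
      exact Submodule.subset_span (s.equivFin.symm i).2
    have haspan : ∀ b ∈ (maximalIdeal R) ^ t, ∀ x : E, (∀ i, a i • x = 0) → b • x = 0 := by
      intro b hb x hx
      rw [← hs] at hb
      refine Submodule.span_induction ?_ ?_ ?_ ?_ hb
      · intro y hy
        have : y = a (s.equivFin ⟨y, hy⟩) := by rw [ha]; simp
        rw [this]; exact hx _
      · rw [zero_smul]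
      · intro y z _ _ hy hz; rw [add_smul, hy, hz, add_zero]
      · intro c y _ hy; rw [smul_eq_mul, mul_smul, hy, smul_zero]
    set M := tors R E (t + 1) with hM
    set μ : Fin d → (↥M →ₗ[R] E) := fun i => a i • M.subtype with hμdef
    set τ : ↥M →ₗ[R] E := (φ - r • LinearMap.id) ∘ₗ M.subtype with hτdef
    have hμx : ∀ i (x : ↥M), μ i x = a i • (x : E) := fun i x => rfl
    have hτx : ∀ x : ↥M, τ x = φ x - r • (x : E) := fun x => rfl
    have hsmall : ∀ (b : R), b ∈ maximalIdeal R → ∀ x : ↥M, b • (x : E) ∈ tors R E t := by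
      intro b hb x c hc
      rw [smul_comm, ← smul_assoc, smul_eq_mul]
      exact x.2 _ (by rw [pow_succ']; exact Ideal.mul_mem_mul hb hc)
    have hμrange : ∀ i (x : ↥M), μ i x ∈ LinearMap.range ι := by
      intro i x
      refine socle_eq ι hι hess _ (fun b hb => ?_)
      rw [hμx, smul_comm, ← smul_assoc, smul_eq_mul]
      refine x.2 _ ?_
      rw [pow_succ]
      exact Ideal.mul_mem_mul (hasub i) hb
    have hτrange : ∀ x : ↥M, τ x ∈ LinearMap.range ι := by
      intro x
      refine socle_eq ι hι hess _ (fun b hb => ?_)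
      rw [hτx, smul_sub, ← map_smul, smul_comm b r]
      rw [hr _ (hsmall b hb x), sub_self]
    have hvan : ∀ x : ↥M, (∀ i, μ i x = 0) → τ x = 0 := by
      intro x hx
      have hxt : (x : E) ∈ tors R E t := by
        intro b hb
        exact haspan b hb x (fun i => hx i)
      rw [hτx, hr _ hxt, sub_self]
    obtain ⟨c, hc⟩ := funct_span ι hι d μ τ hμrange hτrange hvan
    refine ⟨r + ∑ i, c i * a i, fun z hz => ?_⟩
    have := hc ⟨z, hz⟩
    rw [hτx] at this
    have h2 : ∑ i, c i • μ i ⟨z, hz⟩ = (∑ i, c i * a i) • z := by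
      rw [Finset.sum_smul]
      refine Finset.sum_congr rfl (fun i _ => ?_)
      rw [hμx, mul_smul]
    rw [h2] at this
    rw [add_smul, ← this]
    abel

theorem endo_smul (hE : Module.Injective R E) (ι : (R ⧸ maximalIdeal R) →ₗ[R] E)
    (hι : Function.Injective ι)
    (hess : ∀ N : Submodule R E, N ⊓ LinearMap.range ι = ⊥ → N = ⊥)
    (hcomplete : IsAdicComplete (maximalIdeal R) R)
    (φ : E →ₗ[R] E) : ∃ r : R, ∀ z : E, φ z = r • z := by
  choose rr hrr using mult_on_tors hE ι hι hess φ
  have hcompat : ∀ {m n : ℕ}, m ≤ n →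
      rr m ≡ rr n [SMOD ((maximalIdeal R) ^ m • ⊤ : Submodule R R)] := by
    intro m n hmn
    rw [SModEq.sub_mem]
    have hmem : rr m - rr n ∈ (maximalIdeal R) ^ m := by
      refine annih_into hE ι hι _ _ (fun z hz => ?_)
      have hzt : z ∈ tors R E m := hz
      rw [sub_smul, ← hrr m z hzt, ← hrr n z (tors_mono hmn hzt), sub_self]
    simpa [Ideal.smul_top_eq_map] using hmem
  obtain ⟨r, hr⟩ := hcomplete.toIsPrecomplete.prec hcompat
  refine ⟨r, fun z => ?_⟩
  obtain ⟨t, ht⟩ := torsion ι hι hess z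
  have hzt : z ∈ tors R E t := ht
  have h1 : rr t - r ∈ (maximalIdeal R) ^ t := by
    have := hr t
    rw [SModEq.sub_mem] at this
    simpa [Ideal.smul_top_eq_map] using this
  have h2 := ht _ h1
  rw [sub_smul, sub_eq_zero] at h2
  rw [hrr t z hzt, h2]

theorem dual_dual (hE : Module.Injective R E) (ι : (R ⧸ maximalIdeal R) →ₗ[R] E)
    (hι : Function.Injective ι)
    (hess : ∀ N : Submodule R E, N ⊓ LinearMap.range ι = ⊥ → N = ⊥)
    (hcomplete : IsAdicComplete (maximalIdeal R) R)
    (L : Submodule R E) (e : E)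
    (h : ∀ s : R, (∀ w ∈ L, s • w = 0) → s • e = 0) : e ∈ L := by
  by_contra hL
  have hne : (Submodule.Quotient.mk e : E ⧸ L) ≠ 0 := by
    rw [Ne, Submodule.Quotient.mk_eq_zero]; exact hL
  obtain ⟨ψ, hψ⟩ := cogen hE ι hι _ hne
  obtain ⟨r, hr⟩ := endo_smul hE ι hι hess hcomplete (ψ ∘ₗ L.mkQ)
  have hrL : ∀ w ∈ L, r • w = 0 := by
    intro w hw
    rw [← hr w]
    show ψ (L.mkQ w) = 0
    rw [Submodule.mkQ_apply, (Submodule.Quotient.mk_eq_zero _).mpr hw, map_zero]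
  have h0 : r • e = 0 := h r hrL
  rw [← hr e] at h0
  exact hψ h0

end AuxMatlis

section Frob
variable (R : Type u) [CommRing R] (p : ℕ) [Fact p.Prime] [CharP R p]
variable {E : Type u} [AddCommGroup E] [Module R E]

/-- inverse of `FrobAlg.of` -/
def frobUn {n : ℕ} (b : FrobAlg R p n) : R := b

theorem frobUn_of (n : ℕ) (b : R) : frobUn R p (FrobAlg.of R p n b) = b := rfl

theorem FrobBC.smul_tmul_left (n : ℕ) (r b : R) (z : E) :
    r • (FrobBC.tmul R p n b z) = FrobBC.tmul R p n (r * b) z := by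
  show (FrobAlg.of R p n r) • (FrobAlg.of R p n b ⊗ₜ[R] z)
      = (FrobAlg.of R p n r * FrobAlg.of R p n b) ⊗ₜ[R] z
  rw [TensorProduct.smul_tmul', smul_eq_mul]

theorem FrobAlg.smul_eq (n : ℕ) (s : R) (b : FrobAlg R p n) :
    s • b = FrobAlg.of R p n (s ^ p ^ n * frobUn R p b) := by
  rw [Algebra.smul_def]
  have h1 : (algebraMap R (FrobAlg R p n)) s = FrobAlg.of R p n (s ^ p ^ n) := by
    show ((frobenius R p) ^ n) s = s ^ p ^ n
    rw [RingHom.coe_pow, iterate_frobenius]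
  rw [h1]
  rfl

theorem FrobBC.tmul_smul_right (n : ℕ) (b : R) (s : R) (z : E) :
    FrobBC.tmul R p n b (s • z) = s ^ p ^ n • FrobBC.tmul R p n b z := by
  show FrobAlg.of R p n b ⊗ₜ[R] (s • z) = _
  rw [tmul_smul, TensorProduct.smul_tmul', FrobAlg.smul_eq, frobUn_of, FrobBC.smul_tmul_left]
  rfl

theorem FrobBC.tmul_add (n : ℕ) (b : R) (z w : E) :
    FrobBC.tmul R p n b (z + w) = FrobBC.tmul R p n b z + FrobBC.tmul R p n b w :=
  TensorProduct.tmul_add _ _ _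

theorem FrobBC.tmul_zero (n : ℕ) (b : R) : FrobBC.tmul R p n b (0 : E) = 0 :=
  TensorProduct.tmul_zero _ _

/-- any element of `FrobBC` is killed by functionals vanishing on it; general elementary
tensor expressed through `tmul` -/
theorem FrobBC.tensor_eq (n : ℕ) (b : FrobAlg R p n) (z : E) :
    (b ⊗ₜ[R] z : FrobBC R p n E) = FrobBC.tmul R p n (frobUn R p b) z := rfl

/-- the one-step Frobenius map on components, as an additive map -/
noncomputable def Xstep (m : ℕ) : FrobBC R p m E →+ FrobBC R p (m + 1) E :=
  (TensorProduct.map (frobStep R p m) (LinearMap.id (R := R) (M := E))).toAddMonoidHom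

theorem Xstep_tmul (m : ℕ) (b : R) (z : E) :
    Xstep R p m (FrobBC.tmul R p m b z) = FrobBC.tmul R p (m + 1) (b ^ p) z := by
  show TensorProduct.map (frobStep R p m) LinearMap.id (FrobAlg.of R p m b ⊗ₜ[R] z) = _
  rw [TensorProduct.map_tmul]
  rfl

/-- iterated Frobenius map on components -/
noncomputable def Xpow (m : ℕ) : (k : ℕ) → (FrobBC R p m E →+ FrobBC R p (m + k) E)
  | 0 => AddMonoidHom.id _
  | k + 1 => (Xstep R p (m + k)).comp (Xpow m k)

theorem Xpow_tmul (m : ℕ) (k : ℕ) (b : R) (z : E) :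
    Xpow R p m k (FrobBC.tmul R p m b z) = FrobBC.tmul R p (m + k) (b ^ p ^ k) z := by
  induction k with
  | zero =>
    show FrobBC.tmul R p m b z = _
    rw [pow_zero, pow_one]
    rfl
  | succ k ih =>
    show Xstep R p (m + k) (Xpow R p m k (FrobBC.tmul R p m b z)) = _
    rw [ih, Xstep_tmul, ← pow_mul, pow_succ]
    rfl
end Frob

section Xi
variable (R : Type u) [CommRing R] (p : ℕ) [Fact p.Prime] [CharP R p]
variable {E : Type u} [AddCommGroup E] [Module R E]

variable {n m : ℕ} (Φ : FrobBC R p n E →ₗ[R] E) (φ : FrobBC R p m E →ₗ[R] E)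

/-- the level-`m+n` semilinear composite of two functionals, as a map on E -/
noncomputable def sigMap : E →+ E where
  toFun z := Φ (FrobBC.tmul R p n 1 (φ (FrobBC.tmul R p m 1 z)))
  map_zero' := by
    show Φ (FrobBC.tmul R p n 1 (φ (FrobBC.tmul R p m 1 (0 : E)))) = 0
    rw [FrobBC.tmul_zero, map_zero, FrobBC.tmul_zero, map_zero]
  map_add' z w := by
    show Φ (FrobBC.tmul R p n 1 (φ (FrobBC.tmul R p m 1 (z + w)))) = _
    rw [FrobBC.tmul_add, map_add, FrobBC.tmul_add, map_add]

theorem sigMap_apply (z : E) :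
    sigMap R p Φ φ z = Φ (FrobBC.tmul R p n 1 (φ (FrobBC.tmul R p m 1 z))) := rfl

theorem sigMap_smul (s : R) (z : E) :
    sigMap R p Φ φ (s • z) = s ^ p ^ (m + n) • sigMap R p Φ φ z := by
  rw [sigMap_apply, sigMap_apply, FrobBC.tmul_smul_right, map_smul, FrobBC.tmul_smul_right,
    map_smul, ← pow_mul, ← pow_add]

/-- auxiliary bi-additive map for `XiMap` -/
noncomputable def xiAux : FrobAlg R p (m + n) →+ (E →+ E) :=
  AddMonoidHom.mk'
    (fun b => AddMonoidHom.mk' (fun z => frobUn R p b • sigMap R p Φ φ z)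
      (fun z w => by show frobUn R p b • sigMap R p Φ φ (z + w) = _; rw [map_add, smul_add]))
    (fun b c => by
      ext z
      show (frobUn R p b + frobUn R p c) • sigMap R p Φ φ z = _
      rw [add_smul]
      rfl)

theorem xiAux_apply (b : FrobAlg R p (m + n)) (z : E) :
    xiAux R p Φ φ b z = frobUn R p b • sigMap R p Φ φ z := rfl

theorem xiAux_balanced (s : R) (b : FrobAlg R p (m + n)) (z : E) :
    xiAux R p Φ φ (s • b) z = xiAux R p Φ φ b (s • z) := by
  rw [xiAux_apply, xiAux_apply, FrobAlg.smul_eq, frobUn_of, sigMap_smul, mul_smul, smul_comm]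

/-- the additive version of `XiMap` -/
noncomputable def xiAdd : FrobBC R p (m + n) E →+ E :=
  TensorProduct.liftAddHom (xiAux R p Φ φ) (xiAux_balanced R p Φ φ)

theorem xiAdd_tmul (b : FrobAlg R p (m + n)) (z : E) :
    xiAdd R p Φ φ (b ⊗ₜ[R] z) = frobUn R p b • sigMap R p Φ φ z :=
  TensorProduct.liftAddHom_tmul _ _ _ _

/-- the linear map on the `(m+n)`-th Frobenius twist induced by the composite -/
noncomputable def XiMap : FrobBC R p (m + n) E →ₗ[R] E where
  toFun := xiAdd R p Φ φ
  map_add' x y := map_add _ x y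
  map_smul' r w := by
    show xiAdd R p Φ φ (r • w) = r • xiAdd R p Φ φ w
    induction w using TensorProduct.induction_on with
    | zero =>
      show xiAdd R p Φ φ (r • (0 : FrobBC R p (m + n) E)) = r • xiAdd R p Φ φ (0 : FrobBC R p (m + n) E)
      rw [smul_zero, map_zero, smul_zero]
    | tmul b z =>
      rw [FrobBC.tensor_eq, FrobBC.smul_tmul_left]
      show xiAdd R p Φ φ (FrobAlg.of R p (m+n) (r * frobUn R p b) ⊗ₜ[R] z)
        = r • xiAdd R p Φ φ (FrobAlg.of R p (m+n) (frobUn R p b) ⊗ₜ[R] z)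
      rw [xiAdd_tmul, xiAdd_tmul, frobUn_of, frobUn_of, mul_smul]
    | add x y hx hy =>
      change FrobBC R p (m + n) E at x y
      show xiAdd R p Φ φ (r • (@HAdd.hAdd (FrobBC R p (m + n) E) (FrobBC R p (m + n) E) (FrobBC R p (m + n) E) _ x y))
        = r • xiAdd R p Φ φ (@HAdd.hAdd (FrobBC R p (m + n) E) (FrobBC R p (m + n) E) (FrobBC R p (m + n) E) _ x y)
      rw [smul_add, map_add, map_add, hx, hy, smul_add]

theorem XiMap_tmul (b : R) (z : E) :
    XiMap R p Φ φ (FrobBC.tmul R p (m + n) b z)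
      = b • Φ (FrobBC.tmul R p n 1 (φ (FrobBC.tmul R p m 1 z))) := by
  show xiAdd R p Φ φ (FrobAlg.of R p (m+n) b ⊗ₜ[R] z) = _
  rw [xiAdd_tmul, frobUn_of, sigMap_apply]

theorem Xi_Xpow (w : FrobBC R p m E) :
    XiMap R p Φ φ (Xpow R p m n w) = Φ (FrobBC.tmul R p n 1 (φ w)) := by
  induction w using TensorProduct.induction_on with
  | zero =>
    show XiMap R p Φ φ (Xpow R p m n (0 : FrobBC R p m E)) = Φ (FrobBC.tmul R p n 1 (φ (0 : FrobBC R p m E)))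
    rw [map_zero, map_zero, map_zero, FrobBC.tmul_zero, map_zero]
  | tmul b z =>
    rw [FrobBC.tensor_eq, Xpow_tmul, XiMap_tmul]
    have h1 : φ (FrobBC.tmul R p m (frobUn R p b) z)
        = frobUn R p b • φ (FrobBC.tmul R p m 1 z) := by
      rw [← map_smul, FrobBC.smul_tmul_left, mul_one]
    rw [h1, FrobBC.tmul_smul_right, map_smul]
  | add x y hx hy =>
    change FrobBC R p m E at x y
    show XiMap R p Φ φ (Xpow R p m n (@HAdd.hAdd (FrobBC R p m E) (FrobBC R p m E) (FrobBC R p m E) _ x y))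
      = Φ (FrobBC.tmul R p n 1 (φ (@HAdd.hAdd (FrobBC R p m E) (FrobBC R p m E) (FrobBC R p m E) _ x y)))
    rw [map_add, map_add, map_add, FrobBC.tmul_add, map_add, hx, hy]
end Xi

section Phi
variable (R : Type u) [CommRing R] (p : ℕ) [Fact p.Prime] [CharP R p]
variable {E : Type u} [AddCommGroup E] [Module R E]

/-- the `j`-th component of an element of `Φ(E)` -/
noncomputable def comp9 (g : PhiModule R p E) (j : ℕ) : FrobBC R p j E :=
  (show ⨁ i, FrobBC R p i E from g) j

theorem comp9_add (g h : PhiModule R p E) (j : ℕ) :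
    comp9 R p (g + h) j = comp9 R p g j + comp9 R p h j :=
  DirectSum.add_apply _ _ _

theorem comp9_zero (j : ℕ) : comp9 R p (0 : PhiModule R p E) j = 0 := rfl

theorem comp9_smul (r : R) (g : PhiModule R p E) (j : ℕ) :
    comp9 R p (r • g) j = r • comp9 R p g j :=
  DirectSum.smul_apply _ _ _

theorem comp9_of_same (j : ℕ) (w : FrobBC R p j E) :
    comp9 R p (PhiModule.of R p E j w) j = w :=
  DirectSum.of_eq_same _ _

theorem comp9_of_ne (i j : ℕ) (w : FrobBC R p i E) (h : i ≠ j) :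
    comp9 R p (PhiModule.of R p E i w) j = 0 :=
  DirectSum.of_eq_of_ne _ _ _ h.symm

theorem comp9_shift (g : PhiModule R p E) (j : ℕ) :
    comp9 R p (PhiModule.shift R p E g) (j + 1) = Xstep R p j (comp9 R p g j) := by
  have key : ((DirectSum.component R ℕ (fun i => FrobBC R p i E) (j+1)).toAddMonoidHom.comp
      (PhiModule.shift R p E))
      = (Xstep R p j).comp (DirectSum.component R ℕ (fun i => FrobBC R p i E) j).toAddMonoidHom := by
    apply DirectSum.addHom_ext
    intro i w
    show comp9 R p (PhiModule.shift R p E (PhiModule.of R p E i w)) (j+1)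
      = Xstep R p j (comp9 R p (PhiModule.of R p E i w) j)
    have hsh : PhiModule.shift R p E (PhiModule.of R p E i w)
        = PhiModule.of R p E (i+1)
            (TensorProduct.map (frobStep R p i) LinearMap.id w) := by
      exact DirectSum.toAddMonoid_of _ _ _
    rw [hsh]
    by_cases hij : i = j
    · subst hij
      rw [comp9_of_same]
      exact comp9_of_same R p (i+1) _
    · rw [comp9_of_ne R p i j w hij, map_zero]
      exact comp9_of_ne R p (i+1) (j+1) _ (by omega)
  have := congrArg (fun f => f g) key
  exact this

theorem comp9_shift_pow (k : ℕ) (g : PhiModule R p E) (j : ℕ) :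
    comp9 R p ((PhiModule.shift R p E)^[k] g) (j + k) = Xpow R p j k (comp9 R p g j) := by
  induction k generalizing g with
  | zero => rfl
  | succ k ih =>
    rw [Function.iterate_succ_apply']
    show comp9 R p (PhiModule.shift R p E ((PhiModule.shift R p E)^[k] g)) ((j+k)+1)
      = Xstep R p (j+k) (Xpow R p j k (comp9 R p g j))
    rw [comp9_shift, ih]
end Phi


section Zero
variable (R : Type u) [CommRing R] (p : ℕ) [Fact p.Prime] [CharP R p]
variable {E : Type u} [AddCommGroup E] [Module R E]

theorem phi_eq_zero (g : PhiModule R p E) (h : ∀ j, comp9 R p g j = 0) : g = 0 :=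
  DFinsupp.ext h
end Zero

theorem special_implies_fully_special_of_complete (R : Type u) [CommRing R] [IsNoetherianRing R] [IsLocalRing R]
    (p : ℕ) [Fact p.Prime] [CharP R p]
    (E : Type u) [AddCommGroup E] [Module R E]
    (hE : Module.Injective R E)
    (ι : (R ⧸ maximalIdeal R) →ₗ[R] E) (hι : Function.Injective ι)
    (hess : ∀ N : Submodule R E, N ⊓ LinearMap.range ι = ⊥ → N = ⊥)
    (hcomplete : IsAdicComplete (maximalIdeal R) R)
    (hFpure : IsFPure R p)
    (𝔞 : Ideal R) (h𝔞 : IsPhiSpecial R p E 𝔞) :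
    IsFullyPhiSpecial R p E 𝔞 := by
  obtain ⟨N, hNx, rfl⟩ := h𝔞
  intro n hn r hr e he
  -- the submodule L of E generated by all functional images of components of N
  set S : Set E := {y | ∃ (m : ℕ) (g : PhiModule R p E), g ∈ N ∧
    ∃ φ : FrobBC R p m E →ₗ[R] E, y = φ (comp9 R p g m)} with hS
  set L : Submodule R E := Submodule.span R S with hL
  -- anything killing L lies in the annihilator of N
  have hann : ∀ s : R, (∀ w ∈ L, s • w = 0) → s ∈ N.annihilator := by
    intro s hs
    rw [Submodule.mem_annihilator]
    intro g hg
    refine phi_eq_zero R p _ (fun j => ?_)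
    rw [comp9_smul]
    refine eq_zero_of_forall hE ι hι _ (fun φ => ?_)
    rw [map_smul]
    refine hs _ (Submodule.subset_span ?_)
    exact ⟨j, g, hg, φ, rfl⟩
  -- e lies in L by Matlis duality
  have heL : e ∈ L := by
    refine dual_dual hE ι hι hess hcomplete L e (fun s hs => ?_)
    exact he s (hann s hs)
  -- now kill r ⊗ e against an arbitrary functional
  refine eq_zero_of_forall hE ι hι _ (fun Φ => ?_)
  have h1 : Φ (FrobBC.tmul R p n r e) = r • Φ (FrobBC.tmul R p n 1 e) := by
    rw [← map_smul, FrobBC.smul_tmul_left, mul_one]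
  rw [h1]
  clear h1 hn
  have hiter : ∀ (k : ℕ) (g' : PhiModule R p E), g' ∈ N →
      (PhiModule.shift R p E)^[k] g' ∈ N := by
    intro k
    induction k with
    | zero => exact fun g' h => h
    | succ k ih =>
      intro g' h
      rw [Function.iterate_succ_apply']
      exact hNx _ (ih g' h)
  -- span induction on e ∈ L
  refine Submodule.span_induction ?_ ?_ ?_ ?_ heL
  · rintro y ⟨m, g, hg, φ, rfl⟩
    -- iterated shift of g stays in N
    have hgn : (PhiModule.shift R p E)^[n] g ∈ N := hiter n g hg
    have hzero : r • (PhiModule.shift R p E)^[n] g = 0 := by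
      rw [Submodule.mem_annihilator] at hr
      exact hr _ hgn
    have hcz : r • comp9 R p ((PhiModule.shift R p E)^[n] g) (m + n) = 0 := by
      rw [← comp9_smul, hzero, comp9_zero]
    rw [comp9_shift_pow] at hcz
    calc r • Φ (FrobBC.tmul R p n 1 (φ (comp9 R p g m)))
        = r • XiMap R p Φ φ (Xpow R p m n (comp9 R p g m)) := by rw [Xi_Xpow]
      _ = XiMap R p Φ φ (r • Xpow R p m n (comp9 R p g m)) := by rw [map_smul]
      _ = 0 := by rw [hcz, map_zero]
  · rw [FrobBC.tmul_zero, map_zero, smul_zero]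
  · intro y z hy hz hy0 hz0
    rw [FrobBC.tmul_add, map_add, smul_add, hy0, hz0, add_zero]
  · intro c y hy hy0
    rw [FrobBC.tmul_smul_right, map_smul, smul_comm, hy0, smul_zero]
end

section
/- Suppose R is F-pure and let 𝔞 be a fully Φ(E)-special ideal of R. Then 𝔞 is a radical ideal, and every associated prime of 𝔞 (that is, every associated prime of the R-module R/𝔞) is also fully Φ(E)-special. -/
open TensorProduct IsLocalRing DirectSum

universe u v

/-! ### Auxiliary lemmas -/

section Aux

variable {R : Type u} [CommRing R] {p : ℕ} [Fact p.Prime] [CharP R p]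

lemma frobAlg_smul (n : ℕ) (s : R) (a : FrobAlg R p n) :
    s • a = FrobAlg.of R p n (s ^ p ^ n) * a := by
  rw [Algebra.smul_def]
  congr 1
  show ((frobenius R p) ^ n) s = _
  rw [RingHom.coe_pow, iterate_frobenius]
  rfl

lemma tmul_pow_smul (n : ℕ) {M : Type v} [AddCommGroup M] [Module R M] (s r : R) (m : M) :
    FrobBC.tmul R p n (s ^ p ^ n * r) m = FrobBC.tmul R p n r (s • m) := by
  show FrobAlg.of R p n (s ^ p ^ n * r) ⊗ₜ[R] m = FrobAlg.of R p n r ⊗ₜ[R] (s • m)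
  rw [← TensorProduct.smul_tmul, frobAlg_smul]
  rfl

lemma frobBC_smul_tmul (n : ℕ) {M : Type v} [AddCommGroup M] [Module R M] (c r : R) (m : M) :
    c • FrobBC.tmul R p n r m = FrobBC.tmul R p n (c * r) m := by
  show FrobAlg.of R p n c • (FrobAlg.of R p n r ⊗ₜ[R] m) = FrobAlg.of R p n (c * r) ⊗ₜ[R] m
  rw [TensorProduct.smul_tmul']
  rfl

lemma frobBC_tmul_zero (n : ℕ) {M : Type v} [AddCommGroup M] [Module R M] (r : R) :
    FrobBC.tmul R p n r (0 : M) = 0 :=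
  TensorProduct.tmul_zero _ _

lemma frobBC_tmul_add (n : ℕ) {M : Type v} [AddCommGroup M] [Module R M] (r : R) (m₁ m₂ : M) :
    FrobBC.tmul R p n r (m₁ + m₂) = FrobBC.tmul R p n r m₁ + FrobBC.tmul R p n r m₂ :=
  TensorProduct.tmul_add _ _ _

lemma frobBC_add_tmul (n : ℕ) {M : Type v} [AddCommGroup M] [Module R M] (r₁ r₂ : R) (m : M) :
    FrobBC.tmul R p n (r₁ + r₂) m = FrobBC.tmul R p n r₁ m + FrobBC.tmul R p n r₂ m :=
  TensorProduct.add_tmul _ _ _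

/-- Unwrap an element of `R^{(n)}` as an element of `R`. -/
def unFrob (n : ℕ) (a : FrobAlg R p n) : R := a

/-- The canonical additive map `R^{(n+1)} ⊗ E → R^{(1)} ⊗ (R^{(n)} ⊗ E)`. -/
noncomputable def thetaAux (n : ℕ) (E : Type u) [AddCommGroup E] [Module R E] :
    FrobBC R p (n + 1) E →+ FrobBC R p 1 (FrobBC R p n E) :=
  TensorProduct.liftAddHom
    (AddMonoidHom.mk'
      (fun c : FrobAlg R p (n + 1) => AddMonoidHom.mk'
        (fun e : E => FrobBC.tmul R p 1 (unFrob (n + 1) c) (FrobBC.tmul R p n 1 e))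
        (fun e₁ e₂ => by simp only [frobBC_tmul_add]))
      (fun c₁ c₂ => AddMonoidHom.ext fun e => by
        show FrobBC.tmul R p 1 (unFrob (n + 1) c₁ + unFrob (n + 1) c₂) (FrobBC.tmul R p n 1 e)
          = FrobBC.tmul R p 1 (unFrob (n + 1) c₁) (FrobBC.tmul R p n 1 e)
            + FrobBC.tmul R p 1 (unFrob (n + 1) c₂) (FrobBC.tmul R p n 1 e)
        exact frobBC_add_tmul 1 _ _ _))
    (by
      intro r c e
      show FrobBC.tmul R p 1 (unFrob (n + 1) (r • c)) (FrobBC.tmul R p n 1 e)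
        = FrobBC.tmul R p 1 (unFrob (n + 1) c) (FrobBC.tmul R p n 1 (r • e))
      have h1 : FrobBC.tmul R p n 1 (r • e) = (r ^ p ^ n) • FrobBC.tmul R p n 1 e := by
        rw [frobBC_smul_tmul, ← tmul_pow_smul]
      have hpow : r ^ p ^ (n + 1) = (r ^ p ^ n) ^ p ^ 1 := by
        rw [pow_one, ← pow_mul, pow_succ]
      have h2 : unFrob (n + 1) (r • c) = (r ^ p ^ n) ^ p ^ 1 * unFrob (n + 1) c := by
        show r • c = (FrobAlg.of R p (n + 1) ((r ^ p ^ n) ^ p ^ 1) * c : FrobAlg R p (n + 1))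
        rw [frobAlg_smul, hpow]
      rw [h1, ← tmul_pow_smul 1 (r ^ p ^ n) _ _, h2])

lemma thetaAux_tmul (n : ℕ) (E : Type u) [AddCommGroup E] [Module R E] (e : E) :
    thetaAux n E (FrobBC.tmul R p (n + 1) 1 e)
      = FrobBC.tmul R p 1 1 (FrobBC.tmul R p n 1 e) :=
  TensorProduct.liftAddHom_tmul _ _ _ _

lemma tmul_one_injective (hF : IsFPure R p) (E : Type u) [AddCommGroup E] [Module R E] :
    ∀ n : ℕ, 1 ≤ n → Function.Injective (fun e : E => FrobBC.tmul R p n 1 e) := by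
  have key : ∀ n : ℕ, Function.Injective (fun e : E => FrobBC.tmul R p (n + 1) 1 e) := by
    intro n
    induction n with
    | zero => exact hF E
    | succ n ih =>
      intro e₁ e₂ h
      apply ih
      apply hF (FrobBC R p (n + 1) E)
      have := congrArg (thetaAux (n + 1) E) h
      rwa [thetaAux_tmul, thetaAux_tmul] at this
  intro n hn
  obtain ⟨m, rfl⟩ : ∃ m, n = m + 1 := ⟨n - 1, by omega⟩
  exact key m

lemma lift_elem (E : Type u) [AddCommGroup E] [Module R E]
    (hE : Module.Injective R E) {M : Type u} [AddCommGroup M] [Module R M]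
    (x : M) (e : E) (he : ∀ c : R, c • x = 0 → c • e = 0) :
    ∃ h : M →ₗ[R] E, h x = e := by
  set K := LinearMap.ker (LinearMap.toSpanSingleton R M x) with hK
  have hf : Function.Injective (K.liftQ (LinearMap.toSpanSingleton R M x) le_rfl) := by
    rw [← LinearMap.ker_eq_bot]
    exact Submodule.ker_liftQ_eq_bot' K _ hK
  have hKe : K ≤ LinearMap.ker (LinearMap.toSpanSingleton R E e) := by
    intro c hc
    simp only [hK, LinearMap.mem_ker, LinearMap.toSpanSingleton_apply] at hc ⊢
    exact he c hc
  obtain ⟨h, hh⟩ := hE.out _ hf (K.liftQ (LinearMap.toSpanSingleton R E e) hKe)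
  refine ⟨h, ?_⟩
  have := hh (Submodule.Quotient.mk (1 : R))
  rw [Submodule.liftQ_apply, Submodule.liftQ_apply, LinearMap.toSpanSingleton_apply,
    LinearMap.toSpanSingleton_apply, one_smul, one_smul] at this
  exact this

end Aux

theorem fully_special_is_radical_and_associated_primes_fully_special (R : Type u) [CommRing R] [IsNoetherianRing R] [IsLocalRing R]
    (p : ℕ) [Fact p.Prime] [CharP R p]
    (E : Type u) [AddCommGroup E] [Module R E]
    (hE : Module.Injective R E)
    (ι : (R ⧸ maximalIdeal R) →ₗ[R] E) (hι : Function.Injective ι)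
    (hess : ∀ N : Submodule R E, N ⊓ LinearMap.range ι = ⊥ → N = ⊥)
    (hFpure : IsFPure R p)
    (𝔞 : Ideal R) (h𝔞 : IsFullyPhiSpecial R p E 𝔞) :
    𝔞.radical = 𝔞 ∧
      ∀ P ∈ associatedPrimes R (R ⧸ 𝔞), IsFullyPhiSpecial R p E P := by
  have posp : 1 ≤ p ^ 1 := Nat.one_le_pow _ _ (Fact.out (p := p.Prime)).pos
  constructor
  · -- 𝔞 is radical
    refine le_antisymm ?_ Ideal.le_radical
    intro r hr
    by_contra hna
    -- produce a separating element of `E`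
    obtain ⟨h, hh⟩ := lift_elem E hE (Submodule.Quotient.mk (p := 𝔞) r)
      (ι (Submodule.Quotient.mk (1 : R)))
      (by
        intro c hc
        have hcr : c * r ∈ 𝔞 := by
          rwa [← Submodule.Quotient.mk_smul, Submodule.Quotient.mk_eq_zero, smul_eq_mul] at hc
        have hcm : c ∈ maximalIdeal R := by
          by_contra hcu
          exact hna ((Ideal.unit_mul_mem_iff_mem 𝔞
            (IsLocalRing.notMem_maximalIdeal.mp hcu)).mp hcr)
        have hz : c • (Submodule.Quotient.mk (1 : R) : R ⧸ maximalIdeal R) = 0 := by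
          rw [← Submodule.Quotient.mk_smul, Submodule.Quotient.mk_eq_zero]
          simpa using hcm
        rw [← map_smul, hz, map_zero])
    set e : E := h (Submodule.Quotient.mk (1 : R)) with hedef
    have hann : ∀ a ∈ 𝔞, a • e = 0 := by
      intro a ha
      rw [hedef, ← map_smul, ← Submodule.Quotient.mk_smul, smul_eq_mul, mul_one]
      rw [show Submodule.Quotient.mk (p := 𝔞) a = 0 from (Submodule.Quotient.mk_eq_zero _).mpr ha,
        map_zero]
    have hre : r • e ≠ 0 := by
      rw [hedef, ← map_smul, ← Submodule.Quotient.mk_smul, smul_eq_mul, mul_one, hh]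
      intro h0
      have h1 : (Submodule.Quotient.mk (1 : R) : R ⧸ maximalIdeal R) = 0 :=
        hι (h0.trans (map_zero ι).symm)
      rw [Submodule.Quotient.mk_eq_zero] at h1
      exact (Ideal.ne_top_iff_one _).mp (IsLocalRing.maximalIdeal.isMaximal R).ne_top h1
    -- now use full Φ(E)-speciality and F-purity
    obtain ⟨k, hk⟩ := Ideal.mem_radical_iff.mp hr
    set n := k + 1 with hn
    have hkn : k ≤ p ^ n := by
      calc k ≤ 2 ^ k := Nat.le_of_lt (Nat.lt_two_pow_self (n := k))
        _ ≤ 2 ^ n := Nat.pow_le_pow_right (by omega) (by omega)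
        _ ≤ p ^ n := Nat.pow_le_pow_left (Fact.out (p := p.Prime)).two_le n
    have hmem : r ^ p ^ n * 1 ∈ 𝔞 := by
      rw [mul_one, show p ^ n = (p ^ n - k) + k by omega, pow_add]
      exact Ideal.mul_mem_left _ _ hk
    have h0 : FrobBC.tmul R p n 1 (r • e) = 0 := by
      rw [← tmul_pow_smul]
      exact h𝔞 n (by omega) _ hmem e hann
    have hz : FrobBC.tmul R p n 1 ((0 : R) • e) = 0 := by
      rw [zero_smul]
      exact frobBC_tmul_zero n 1
    exact hre (by simpa using tmul_one_injective hFpure E n (by omega) (h0.trans hz.symm))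
  · -- associated primes are fully Φ(E)-special
    rintro P hPa n hn r hrP e he
    obtain ⟨hP, x, hPx⟩ := isAssociatedPrime_iff.mp hPa
    obtain ⟨t, rfl⟩ := Submodule.Quotient.mk_surjective 𝔞 x
    have hrx : r • Submodule.Quotient.mk (p := 𝔞) t = 0 := by
      rw [hPx] at hrP
      exact (Submodule.mem_bot R).mp (Submodule.mem_colon_singleton.mp hrP)
    have hrt : r * t ∈ 𝔞 := by
      rwa [← Submodule.Quotient.mk_smul, Submodule.Quotient.mk_eq_zero, smul_eq_mul] at hrx
    -- lift e along multiplication by t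
    obtain ⟨h, hh⟩ := lift_elem E hE (Submodule.Quotient.mk (p := 𝔞) t) e
      (by
        intro c hc
        apply he
        rw [hPx]
        exact Submodule.mem_colon_singleton.mpr ((Submodule.mem_bot R).mpr hc))
    set e' : E := h (Submodule.Quotient.mk (1 : R)) with he'def
    have hann' : ∀ a ∈ 𝔞, a • e' = 0 := by
      intro a ha
      rw [he'def, ← map_smul, ← Submodule.Quotient.mk_smul, smul_eq_mul, mul_one]
      rw [show Submodule.Quotient.mk (p := 𝔞) a = 0 from (Submodule.Quotient.mk_eq_zero _).mpr ha,
        map_zero]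
    have hte' : t • e' = e := by
      rw [he'def, ← map_smul, ← Submodule.Quotient.mk_smul, smul_eq_mul, mul_one, hh]
    have hpn : 1 ≤ p ^ n :=
      Nat.one_le_pow _ _ (Fact.out (p := p.Prime)).pos
    have hmem : t ^ p ^ n * r ∈ 𝔞 := by
      rw [show p ^ n = (p ^ n - 1) + 1 by omega, pow_add, pow_one, mul_assoc, mul_comm t r]
      exact Ideal.mul_mem_left _ _ hrt
    calc FrobBC.tmul R p n r e = FrobBC.tmul R p n r (t • e') := by rw [hte']
      _ = FrobBC.tmul R p n (t ^ p ^ n * r) e' := (tmul_pow_smul n t r e').symm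
      _ = 0 := h𝔞 n hn _ hmem e' hann'
end

section
/- Suppose R is F-pure and let (𝔞_λ)_{λ ∈ Λ} be a nonempty family of fully Φ(E)-special ideals of R. Then the sum Σ_{λ ∈ Λ} 𝔞_λ is again a fully Φ(E)-special ideal of R. -/
open TensorProduct IsLocalRing DirectSum

universe u v

theorem sum_of_fully_special_is_fully_special (R : Type u) [CommRing R] [IsNoetherianRing R] [IsLocalRing R]
    (p : ℕ) [Fact p.Prime] [CharP R p]
    (E : Type u) [AddCommGroup E] [Module R E]
    (hE : Module.Injective R E)
    (ι : (R ⧸ maximalIdeal R) →ₗ[R] E) (hι : Function.Injective ι)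
    (hess : ∀ N : Submodule R E, N ⊓ LinearMap.range ι = ⊥ → N = ⊥)
    (hFpure : IsFPure R p)
    (Λ : Type v) [Nonempty Λ] (𝔞 : Λ → Ideal R)
    (h𝔞 : ∀ l : Λ, IsFullyPhiSpecial R p E (𝔞 l)) :
    IsFullyPhiSpecial R p E (⨆ l : Λ, 𝔞 l) := by
  intro n hn r hr e he
  refine Submodule.iSup_induction (motive := fun x => FrobBC.tmul R p n x e = 0) 𝔞 hr
    ?_ ?_ ?_
  · intro l x hx
    exact h𝔞 l n hn x hx e (fun a ha => he a (le_iSup 𝔞 l ha))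
  · show (0 : FrobAlg R p n) ⊗ₜ[R] e = 0
    exact TensorProduct.zero_tmul _ _
  · intro x y hx hy
    have hadd : FrobBC.tmul R p n (x + y) e
        = FrobBC.tmul R p n x e + FrobBC.tmul R p n y e :=
      TensorProduct.add_tmul (FrobAlg.of R p n x) (FrobAlg.of R p n y) e
    rw [hadd, hx, hy, add_zero]
end

section
/- Suppose R is F-pure and that every Φ(E)-special ideal of R is fully Φ(E)-special. Let 𝔠 be a proper ideal of R that is Φ(E)-special. Then the local ring R/𝔠 is F-pure (that is, for every R/𝔠-module M, the natural map M → (R/𝔠)^{(1)} ⊗_{R/𝔠} M sending m to 1 ⊗ m is injective, where (R/𝔠)^{(1)} ⊗_{R/𝔠} M is the base change of M along the Frobenius of R/𝔠). -/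
open TensorProduct IsLocalRing DirectSum

universe u v

/-- Auxiliary extension lemma: if `E` is an injective `R`-module, `m : M`, `e₀ : E` and every
`r ∈ R` killing `m` kills `e₀`, then there is an `R`-linear map `M → E` sending `m` to `e₀`. -/
theorem exists_extension {R M E : Type u} [CommRing R] [AddCommGroup M] [Module R M]
    [AddCommGroup E] [Module R E] (hE : Module.Injective R E) (m : M) (e₀ : E)
    (h : ∀ r : R, r • m = 0 → r • e₀ = 0) :
    ∃ ρ : M →ₗ[R] E, ρ m = e₀ := by
  have hker : LinearMap.ker (LinearMap.toSpanSingleton R M m)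
      ≤ LinearMap.ker (LinearMap.toSpanSingleton R E e₀) := by
    intro r hr
    rw [LinearMap.mem_ker, LinearMap.toSpanSingleton_apply] at hr ⊢
    exact h r hr
  obtain ⟨ρ, hρ⟩ := hE.out (LinearMap.range (LinearMap.toSpanSingleton R M m)).subtype
    (Submodule.injective_subtype _)
    ((Submodule.liftQ _ (LinearMap.toSpanSingleton R E e₀) hker).comp
      (LinearMap.quotKerEquivRange (LinearMap.toSpanSingleton R M m)).symm.toLinearMap)
  have hmem : m ∈ LinearMap.range (LinearMap.toSpanSingleton R M m) :=
    ⟨1, by rw [LinearMap.toSpanSingleton_apply, one_smul]⟩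
  refine ⟨ρ, ?_⟩
  have h1 := hρ ⟨m, hmem⟩
  have h2 : (LinearMap.quotKerEquivRange (LinearMap.toSpanSingleton R M m)).symm ⟨m, hmem⟩
      = Submodule.Quotient.mk (1 : R) := by
    rw [LinearEquiv.symm_apply_eq]
    refine Subtype.ext ?_
    rw [LinearMap.quotKerEquivRange_apply_mk, LinearMap.toSpanSingleton_apply, one_smul]
  calc ρ m = ρ ((LinearMap.range (LinearMap.toSpanSingleton R M m)).subtype ⟨m, hmem⟩) := rfl
    _ = _ := h1
    _ = e₀ := by
        rw [LinearMap.comp_apply, LinearEquiv.coe_toLinearMap, h2, Submodule.liftQ_apply,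
          LinearMap.toSpanSingleton_apply, one_smul]

/-- In `R^{(1)}`, the scalar action of `R` is given by `r • s = r ^ p * s`. -/
theorem frobAlg_smul_s12 {A : Type v} (p : ℕ) [CommRing A] [Fact p.Prime] [CharP A p] (r s : A) :
    r • (FrobAlg.of A p 1 s) = FrobAlg.of A p 1 (r ^ p * s) := by
  rw [Algebra.smul_def]
  have h : algebraMap A (FrobAlg A p 1) r = FrobAlg.of A p 1 (r ^ p) := by
    show (frobenius A p ^ 1) r = r ^ p
    rw [pow_one, frobenius_def]
  rw [h]
  rfl

theorem quotient_by_special_is_F_pure (R : Type u) [CommRing R] [IsNoetherianRing R] [IsLocalRing R]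
    (p : ℕ) [Fact p.Prime] [CharP R p]
    (E : Type u) [AddCommGroup E] [Module R E]
    (hE : Module.Injective R E)
    (ι : (R ⧸ maximalIdeal R) →ₗ[R] E) (hι : Function.Injective ι)
    (hess : ∀ N : Submodule R E, N ⊓ LinearMap.range ι = ⊥ → N = ⊥)
    (hFpure : IsFPure R p)
    (hfull : ∀ 𝔞 : Ideal R, IsPhiSpecial R p E 𝔞 → IsFullyPhiSpecial R p E 𝔞)
    (𝔠 : Ideal R) (h𝔠 : 𝔠 ≠ ⊤) (hsp : IsPhiSpecial R p E 𝔠)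
    [CharP (R ⧸ 𝔠) p] :
    IsFPure (R ⧸ 𝔠) p := by
  classical
  have hfs : IsFullyPhiSpecial R p E 𝔠 := hfull 𝔠 hsp
  haveI : Nontrivial (R ⧸ maximalIdeal R) :=
    Ideal.Quotient.nontrivial_iff.mpr (Ideal.IsMaximal.ne_top inferInstance)
  set e₀ : E := ι 1 with he₀def
  have he₀ : e₀ ≠ 0 := by
    intro h
    exact one_ne_zero (hι (by rw [← he₀def, h, map_zero]))
  have h𝔪e₀ : ∀ r ∈ maximalIdeal R, r • e₀ = 0 := by
    intro r hr
    have h1 : r • (1 : R ⧸ maximalIdeal R) = 0 := by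
      rw [Algebra.smul_def, mul_one, Ideal.Quotient.algebraMap_eq,
        Ideal.Quotient.eq_zero_iff_mem]
      exact hr
    rw [he₀def, ← map_smul, h1, map_zero]
  intro M _ _ m₁ m₂ hyp
  have hyp' : FrobBC.tmul (R ⧸ 𝔠) p 1 1 m₁ = FrobBC.tmul (R ⧸ 𝔠) p 1 1 m₂ := hyp
  rw [← sub_eq_zero]
  by_contra hm
  set m : M := m₁ - m₂ with hmdef
  have h0 : FrobBC.tmul (R ⧸ 𝔠) p 1 1 m = 0 := by
    have hsub : FrobBC.tmul (R ⧸ 𝔠) p 1 1 m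
        = FrobBC.tmul (R ⧸ 𝔠) p 1 1 m₁ - FrobBC.tmul (R ⧸ 𝔠) p 1 1 m₂ :=
      TensorProduct.tmul_sub _ m₁ m₂
    rw [hsub, hyp', sub_self]
  -- `M` as an `R`-module via restriction of scalars
  letI instRM : Module R M := Module.compHom M (Ideal.Quotient.mk 𝔠)
  -- construct an `R`-linear map `ρ : M → E` with `ρ m = e₀`
  have hann : ∀ r : R, r • m = 0 → r • e₀ = 0 := by
    intro r hr
    apply h𝔪e₀
    by_contra h
    have hu : IsUnit r := IsLocalRing.notMem_maximalIdeal.mp h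
    obtain ⟨u, rfl⟩ := hu
    apply hm
    calc m = ((u⁻¹ : Rˣ) : R) • (((u : Rˣ) : R) • m) := by
            rw [smul_smul, Units.inv_mul, one_smul]
      _ = 0 := by rw [hr, smul_zero]
  obtain ⟨ρ, hρm⟩ := exists_extension hE m e₀ hann
  -- `ρ` lands in the `𝔠`-torsion of `E`
  have hCtor : ∀ x : M, ∀ c ∈ 𝔠, c • ρ x = 0 := by
    intro x c hc
    have hcx : c • x = 0 := by
      show (Ideal.Quotient.mk 𝔠 c) • x = 0
      rw [Ideal.Quotient.eq_zero_iff_mem.mpr hc, zero_smul]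
    rw [← map_smul, hcx, map_zero]
  have hsmulBC : ∀ (a r : R) (e : E),
      a • FrobBC.tmul R p 1 r e = FrobBC.tmul R p 1 (a * r) e := fun a r e => rfl
  -- the family of linear maps `r ↦ r ⊗ ρ x`
  let l : M → (R →ₗ[R] FrobBC R p 1 E) := fun x =>
    { toFun := fun r => FrobBC.tmul R p 1 r (ρ x)
      map_add' := fun a b => TensorProduct.add_tmul _ _ _
      map_smul' := fun a r => by
        simp only [RingHom.id_apply, smul_eq_mul]
        rw [hsmulBC] }
  have hlker : ∀ x : M, 𝔠 ≤ LinearMap.ker (l x) := by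
    intro x c hc
    rw [LinearMap.mem_ker]
    show FrobBC.tmul R p 1 c (ρ x) = 0
    exact hfs 1 le_rfl c hc (ρ x) (hCtor x)
  let lq : M → ((R ⧸ 𝔠) →ₗ[R] FrobBC R p 1 E) := fun x => Submodule.liftQ 𝔠 (l x) (hlker x)
  have hlq : ∀ (x : M) (r : R),
      lq x (FrobAlg.of (R ⧸ 𝔠) p 1 (Ideal.Quotient.mk 𝔠 r)) = FrobBC.tmul R p 1 r (ρ x) :=
    fun x r => rfl
  have hsurj : ∀ w : FrobAlg (R ⧸ 𝔠) p 1,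
      ∃ r : R, FrobAlg.of (R ⧸ 𝔠) p 1 (Ideal.Quotient.mk 𝔠 r) = w := fun w =>
    Ideal.Quotient.mk_surjective w
  -- the balanced biadditive map
  let inner : FrobAlg (R ⧸ 𝔠) p 1 → (M →+ FrobBC R p 1 E) := fun w =>
    AddMonoidHom.mk' (fun x => lq x w) (by
      intro x y
      obtain ⟨r, rfl⟩ := hsurj w
      simp only [hlq, map_add]
      exact TensorProduct.tmul_add _ _ _)
  let fbig : FrobAlg (R ⧸ 𝔠) p 1 →+ (M →+ FrobBC R p 1 E) :=
    AddMonoidHom.mk' inner (by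
      intro w w'
      ext x
      show lq x (w + w') = lq x w + lq x w'
      exact map_add (lq x) w w')
  have hbal : ∀ (s : R ⧸ 𝔠) (w : FrobAlg (R ⧸ 𝔠) p 1) (x : M),
      fbig (s • w) x = fbig w (s • x) := by
    intro s w x
    obtain ⟨a, rfl⟩ := Ideal.Quotient.mk_surjective s
    obtain ⟨b, rfl⟩ := hsurj w
    have h1 : (Ideal.Quotient.mk 𝔠 a) • (FrobAlg.of (R ⧸ 𝔠) p 1 (Ideal.Quotient.mk 𝔠 b))
        = FrobAlg.of (R ⧸ 𝔠) p 1 (Ideal.Quotient.mk 𝔠 (a ^ p * b)) := by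
      rw [frobAlg_smul_s12, ← map_pow, ← map_mul]
    have h3 : ρ ((Ideal.Quotient.mk 𝔠 a) • x) = a • ρ x := map_smul ρ a x
    have h2 : FrobBC.tmul R p 1 b (a • ρ x) = FrobBC.tmul R p 1 (a ^ p * b) (ρ x) := by
      show (FrobAlg.of R p 1 b) ⊗ₜ[R] (a • ρ x) = (FrobAlg.of R p 1 (a ^ p * b)) ⊗ₜ[R] (ρ x)
      rw [← TensorProduct.smul_tmul, frobAlg_smul_s12]
    calc fbig ((Ideal.Quotient.mk 𝔠 a) • (FrobAlg.of (R ⧸ 𝔠) p 1 (Ideal.Quotient.mk 𝔠 b))) x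
        = lq x (FrobAlg.of (R ⧸ 𝔠) p 1 (Ideal.Quotient.mk 𝔠 (a ^ p * b))) := by rw [h1]; rfl
      _ = FrobBC.tmul R p 1 (a ^ p * b) (ρ x) := hlq x _
      _ = FrobBC.tmul R p 1 b (a • ρ x) := h2.symm
      _ = FrobBC.tmul R p 1 b (ρ ((Ideal.Quotient.mk 𝔠 a) • x)) := by rw [h3]
      _ = fbig (FrobAlg.of (R ⧸ 𝔠) p 1 (Ideal.Quotient.mk 𝔠 b)) ((Ideal.Quotient.mk 𝔠 a) • x) :=
          (hlq _ b).symm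
  -- apply the induced additive map to the relation `1 ⊗ m = 0`
  have h1 : TensorProduct.liftAddHom fbig hbal (FrobBC.tmul (R ⧸ 𝔠) p 1 1 m) = 0 := by
    rw [h0]
    exact map_zero (TensorProduct.liftAddHom fbig hbal)
  have h2 : TensorProduct.liftAddHom fbig hbal (FrobBC.tmul (R ⧸ 𝔠) p 1 1 m)
      = lq m (FrobAlg.of (R ⧸ 𝔠) p 1 (1 : R ⧸ 𝔠)) :=
    TensorProduct.liftAddHom_tmul fbig hbal _ m
  have h3 : lq m (FrobAlg.of (R ⧸ 𝔠) p 1 (1 : R ⧸ 𝔠)) = FrobBC.tmul R p 1 1 (ρ m) := by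
    rw [show (1 : R ⧸ 𝔠) = Ideal.Quotient.mk 𝔠 1 from (map_one _).symm]
    exact hlq m 1
  have key : FrobBC.tmul R p 1 (1 : R) (ρ m) = 0 := by rw [← h3, ← h2, h1]
  have hz : FrobBC.tmul R p 1 (1 : R) (0 : E) = 0 := TensorProduct.tmul_zero _ _
  have hρ0 : ρ m = 0 := hFpure E (key.trans hz.symm)
  rw [hρm] at hρ0
  exact he₀ hρ0
end

section
/- Suppose R is F-finite and let 𝔟 be an ideal of R. Then 𝔟 is uniformly F-compatible if and only if for every n ≥ 1, every r ∈ 𝔟 and every e ∈ (0 :_E 𝔟), the element r ⊗ e is zero in R^{(n)} ⊗_R E (i.e., if and only if 𝔟 is fully Φ(E)-special). -/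
open TensorProduct IsLocalRing DirectSum

universe u v

/-! ### Auxiliary: the pairing `M ⊗ E → Hom(Hom(M,R), E)` -/

section ThetaAux

variable {A : Type u} [CommRing A] (E : Type u) [AddCommGroup E] [Module A E]

/-- The natural map `M ⊗ E → Hom(Hom(M,A), E)`, `m ⊗ e ↦ (φ ↦ φ m • e)`. -/
noncomputable def thetaMap (M : Type u) [AddCommGroup M] [Module A M] :
    M ⊗[A] E →ₗ[A] (M →ₗ[A] A) →ₗ[A] E :=
  TensorProduct.lift <| LinearMap.mk₂ A
    (fun m e =>
      { toFun := fun φ => φ m • e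
        map_add' := fun φ ψ => by
          show (φ + ψ) m • e = φ m • e + ψ m • e
          rw [LinearMap.add_apply, add_smul]
        map_smul' := fun c φ => by
          show (c • φ) m • e = c • (φ m • e)
          rw [LinearMap.smul_apply, smul_assoc] })
    (fun m₁ m₂ e => LinearMap.ext fun φ => by
      show φ (m₁ + m₂) • e = φ m₁ • e + φ m₂ • e
      rw [map_add, add_smul])
    (fun c m e => LinearMap.ext fun φ => by
      show φ (c • m) • e = c • (φ m • e)
      rw [map_smul, smul_assoc])
    (fun m e₁ e₂ => LinearMap.ext fun φ => by
      show φ m • (e₁ + e₂) = φ m • e₁ + φ m • e₂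
      rw [smul_add])
    (fun c m e => LinearMap.ext fun φ => by
      show φ m • (c • e) = c • (φ m • e)
      rw [smul_comm])

@[simp] lemma thetaMap_tmul (M : Type u) [AddCommGroup M] [Module A M]
    (m : M) (e : E) (φ : M →ₗ[A] A) :
    thetaMap E M (m ⊗ₜ[A] e) φ = φ m • e := rfl

lemma thetaMap_rTensor {M N : Type u} [AddCommGroup M] [Module A M]
    [AddCommGroup N] [Module A N] (f : M →ₗ[A] N) (z : M ⊗[A] E) (φ : N →ₗ[A] A) :
    thetaMap E N (LinearMap.rTensor E f z) φ = thetaMap E M z (φ.comp f) := by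
  induction z using TensorProduct.induction_on with
  | zero => simp
  | tmul m e => simp
  | add x y hx hy => simp [hx, hy]

variable {k : ℕ}

/-- The `i`-th coordinate map `(Fin k → A) ⊗ E → E`. -/
noncomputable def kappaMap (i : Fin k) : ((Fin k → A) ⊗[A] E) →ₗ[A] E :=
  (TensorProduct.lid A E).toLinearMap.comp (LinearMap.rTensor E (LinearMap.proj i))

@[simp] lemma kappaMap_tmul (i : Fin k) (v : Fin k → A) (e : E) :
    kappaMap E i (v ⊗ₜ[A] e) = v i • e := by
  simp [kappaMap]

lemma sum_single_kappaMap (z : (Fin k → A) ⊗[A] E) :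
    ∑ i, (Pi.single i 1 : Fin k → A) ⊗ₜ[A] kappaMap E i z = z := by
  induction z using TensorProduct.induction_on with
  | zero => simp
  | tmul v e =>
    have h1 : ∀ i : Fin k, (Pi.single i 1 : Fin k → A) ⊗ₜ[A] ((v i : A) • e)
        = (v i • (Pi.single i 1 : Fin k → A)) ⊗ₜ[A] e := by
      intro i; rw [TensorProduct.smul_tmul]
    calc ∑ i, (Pi.single i 1 : Fin k → A) ⊗ₜ[A] kappaMap E i (v ⊗ₜ[A] e)
        = ∑ i, (v i • (Pi.single i 1 : Fin k → A)) ⊗ₜ[A] e := by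
          simp only [kappaMap_tmul]; exact Finset.sum_congr rfl fun i _ => h1 i
      _ = (∑ i, v i • (Pi.single i 1 : Fin k → A)) ⊗ₜ[A] e := by
          rw [TensorProduct.sum_tmul]
      _ = v ⊗ₜ[A] e := by
          congr 1
          funext j
          simp [Finset.sum_apply, Pi.single_apply, mul_comm]
  | add x y hx hy =>
    simp only [map_add, TensorProduct.tmul_add, Finset.sum_add_distrib, hx, hy]

lemma thetaMap_proj (i : Fin k) (z : (Fin k → A) ⊗[A] E) :
    thetaMap E (Fin k → A) z (LinearMap.proj i) = kappaMap E i z := by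
  induction z using TensorProduct.induction_on with
  | zero => simp
  | tmul v e => simp
  | add x y hx hy => simp [hx, hy]

lemma thetaMap_free_eq_zero (z : (Fin k → A) ⊗[A] E)
    (hz : thetaMap E (Fin k → A) z = 0) : z = 0 := by
  rw [← sum_single_kappaMap E z]
  have : ∀ i : Fin k, kappaMap E i z = 0 := fun i => by
    rw [← thetaMap_proj, hz]; rfl
  simp [this]

lemma thetaMap_surjective (M : Type u) [AddCommGroup M] [Module A M]
    [Module.Finite A M] (hE : Module.Injective A E) :
    Function.Surjective (thetaMap (A := A) E M) := by
  obtain ⟨k, π, hπ⟩ := Module.Finite.exists_fin' A M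
  intro g
  have hinj : Function.Injective (LinearMap.lcomp A A π) := by
    intro φ ψ h
    ext m
    obtain ⟨v, rfl⟩ := hπ m
    exact DFunLike.congr_fun h v
  obtain ⟨G, hG⟩ := hE.out _ hinj g
  refine ⟨LinearMap.rTensor E π
    (∑ i, (Pi.single i 1 : Fin k → A) ⊗ₜ[A] G (LinearMap.proj i)), ?_⟩
  ext φ
  rw [thetaMap_rTensor]
  have hψ : G (φ.comp π) = g φ := hG φ
  have hrep : φ.comp π = ∑ i, (φ.comp π) (Pi.single i 1) • LinearMap.proj (R := A) i := by
    refine LinearMap.ext fun v => ?_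
    rw [LinearMap.pi_apply_eq_sum_univ (φ.comp π) v]
    simp only [LinearMap.sum_apply, LinearMap.smul_apply, LinearMap.proj_apply,
      LinearMap.comp_apply, smul_eq_mul, mul_comm]
    refine Finset.sum_congr rfl fun i _ => ?_
    congr 2
    congr 1
    funext j
    simp [Pi.single_apply, eq_comm]
  calc thetaMap E (Fin k → A)
        (∑ i, (Pi.single i 1 : Fin k → A) ⊗ₜ[A] G (LinearMap.proj i)) (φ.comp π)
      = ∑ i, (φ.comp π) (Pi.single i 1) • G (LinearMap.proj i) := by
        rw [map_sum]; simp
    _ = G (∑ i, (φ.comp π) (Pi.single i 1) • LinearMap.proj (R := A) i) := by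
        rw [map_sum]; simp
    _ = g φ := by rw [← hrep]; exact hψ

lemma thetaMap_eq_zero [IsNoetherianRing A] (M : Type u) [AddCommGroup M] [Module A M]
    [Module.Finite A M] (hE : Module.Injective A E)
    (z : M ⊗[A] E) (hz : thetaMap (A := A) E M z = 0) : z = 0 := by
  obtain ⟨k, π, hπ⟩ := Module.Finite.exists_fin' A M
  set K := LinearMap.ker π with hK
  have hKfin : Module.Finite A K := Module.Finite.iff_fg.mpr (IsNoetherian.noetherian K)
  obtain ⟨y, rfl⟩ := LinearMap.rTensor_surjective E (g := π) hπ z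
  set ρ : ((Fin k → A) →ₗ[A] A) →ₗ[A] (K →ₗ[A] A) := LinearMap.lcomp A A K.subtype with hρ
  have hker : ∀ ψ, ρ ψ = 0 → thetaMap E (Fin k → A) y ψ = 0 := by
    intro ψ hψ0
    have hKψ : K ≤ LinearMap.ker ψ := by
      intro v hv
      have := DFunLike.congr_fun hψ0 ⟨v, hv⟩
      exact this
    set e := π.quotKerEquivOfSurjective hπ with he
    set φ : M →ₗ[A] A := (K.liftQ ψ hKψ).comp e.symm.toLinearMap with hφ
    have hcomp : φ.comp π = ψ := by
      refine LinearMap.ext fun v => ?_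
      have h1 : e (Submodule.Quotient.mk v) = π v := by
        simp [he, LinearMap.quotKerEquivOfSurjective]
      have h2 : e.symm (π v) = Submodule.Quotient.mk v := by
        rw [← h1, LinearEquiv.symm_apply_apply]
      simp [hφ, h2]
    rw [← hcomp, ← thetaMap_rTensor, hz]
    rfl
  have hle : LinearMap.ker ρ ≤ LinearMap.ker (thetaMap E (Fin k → A) y) := fun ψ hψ => hker ψ hψ
  set gbar : (((Fin k → A) →ₗ[A] A) ⧸ LinearMap.ker ρ) →ₗ[A] E :=
    Submodule.liftQ (LinearMap.ker ρ) (thetaMap E (Fin k → A) y) hle with hgbar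
  set g₀ : LinearMap.range ρ →ₗ[A] E := gbar.comp ρ.quotKerEquivRange.symm.toLinearMap with hg₀
  obtain ⟨g, hg⟩ := hE.out (X := LinearMap.range ρ) (Y := K →ₗ[A] A) (LinearMap.range ρ).subtype (Submodule.injective_subtype _) g₀
  have hkey : ∀ ψ : (Fin k → A) →ₗ[A] A, g (ρ ψ) = thetaMap E (Fin k → A) y ψ := by
    intro ψ
    have hmem : ρ ψ ∈ LinearMap.range ρ := ⟨ψ, rfl⟩
    have h1 : g (ρ ψ) = g₀ ⟨ρ ψ, hmem⟩ := hg ⟨ρ ψ, hmem⟩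
    have h2 : ρ.quotKerEquivRange (Submodule.Quotient.mk ψ) = ⟨ρ ψ, hmem⟩ :=
      Subtype.ext (by simpa using ρ.quotKerEquivRange_apply_mk ψ)
    have h3 : ρ.quotKerEquivRange.symm ⟨ρ ψ, hmem⟩ = Submodule.Quotient.mk ψ := by
      rw [← h2, LinearEquiv.symm_apply_apply]
    rw [h1, hg₀]
    simp only [LinearMap.comp_apply, LinearEquiv.coe_toLinearMap, h3]
    exact Submodule.liftQ_apply _ _ _
  obtain ⟨w, hw⟩ := thetaMap_surjective E K hE g
  have heq : thetaMap E (Fin k → A) (LinearMap.rTensor E K.subtype w)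
      = thetaMap E (Fin k → A) y := by
    refine LinearMap.ext fun ψ => ?_
    rw [thetaMap_rTensor, hw, ← hkey ψ]
    rfl
  have hy : y = LinearMap.rTensor E K.subtype w := by
    have := thetaMap_free_eq_zero E (y - LinearMap.rTensor E K.subtype w)
      (by rw [map_sub, heq, sub_self])
    rw [sub_eq_zero] at this
    exact this
  rw [hy, ← LinearMap.rTensor_comp_apply]
  have h0 : π.comp K.subtype = 0 := LinearMap.ext fun v => v.2
  rw [h0]
  simp

end ThetaAux

/-! ### Auxiliary: `E` cogenerates cyclic modules -/

lemma exists_ann_smul_ne_zero {R : Type u} [CommRing R] [IsLocalRing R]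
    (E : Type u) [AddCommGroup E] [Module R E] (hE : Module.Injective R E)
    (ι : (R ⧸ maximalIdeal R) →ₗ[R] E) (hι : Function.Injective ι)
    (𝔟 : Ideal R) (a : R) (ha : a ∉ 𝔟) :
    ∃ e : E, (∀ x ∈ 𝔟, x • e = 0) ∧ a • e ≠ 0 := by
  set abar : R ⧸ 𝔟 := Submodule.Quotient.mk a with habar
  set T : R →ₗ[R] R ⧸ 𝔟 := LinearMap.toSpanSingleton R (R ⧸ 𝔟) abar with hT
  set c : Ideal R := LinearMap.ker T with hc
  have hcne : c ≠ ⊤ := by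
    intro h
    have h1 : (1 : R) ∈ c := h ▸ Submodule.mem_top
    have : (1 : R) • abar = 0 := h1
    rw [one_smul, habar] at this
    exact ha ((Submodule.Quotient.mk_eq_zero 𝔟).mp this)
  have hcm : c ≤ maximalIdeal R := IsLocalRing.le_maximalIdeal hcne
  set i : (R ⧸ c) →ₗ[R] (R ⧸ 𝔟) := Submodule.liftQ c T le_rfl with hi
  have hiinj : Function.Injective i := by
    rw [← LinearMap.ker_eq_bot, hi]
    exact Submodule.ker_liftQ_eq_bot c T le_rfl le_rfl
  set q : (R ⧸ c) →ₗ[R] (R ⧸ maximalIdeal R) :=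
    Submodule.mapQ c (maximalIdeal R) LinearMap.id hcm with hq
  obtain ⟨h, hh⟩ := hE.out i hiinj (ι.comp q)
  refine ⟨h (Submodule.Quotient.mk 1), ?_, ?_⟩
  · intro x hx
    have h1 : x • (Submodule.Quotient.mk (1 : R) : R ⧸ 𝔟) = 0 := by
      rw [← Submodule.Quotient.mk_smul, smul_eq_mul, mul_one]
      exact (Submodule.Quotient.mk_eq_zero 𝔟).mpr hx
    rw [← map_smul, h1, map_zero]
  · have h2 : i (Submodule.Quotient.mk 1) = Submodule.Quotient.mk a := by
      rw [hi, Submodule.liftQ_apply, hT]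
      simp [habar]
    have h3 : a • h (Submodule.Quotient.mk (1 : R)) = h (Submodule.Quotient.mk a) := by
      rw [← map_smul]
      congr 1
      rw [← Submodule.Quotient.mk_smul, smul_eq_mul, mul_one]
    rw [h3, ← h2, hh]
    simp only [LinearMap.comp_apply]
    have h4 : q (Submodule.Quotient.mk 1) = Submodule.Quotient.mk (1 : R) := by
      rw [hq, Submodule.mapQ_apply]
      rfl
    rw [h4]
    intro h5
    have h6 : (Submodule.Quotient.mk (1 : R) : R ⧸ maximalIdeal R) = 0 := by
      apply hι
      rw [h5, map_zero]
    have h7 : (1 : R) ∈ maximalIdeal R := (Submodule.Quotient.mk_eq_zero _).mp h6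
    exact (IsLocalRing.maximalIdeal.isMaximal R).ne_top (Ideal.eq_top_iff_one _ |>.mpr h7)

/-! ### Auxiliary: F-finiteness for all Frobenius twists -/

lemma frobAlg_module_finite (R : Type u) (p : ℕ) [CommRing R] [Fact p.Prime] [CharP R p]
    (hFF : IsFFinite R p) (n : ℕ) : Module.Finite R (FrobAlg R p n) := by
  have h1 : (frobenius R p).Finite := by
    have h : ((frobenius R p) ^ 1).Finite := hFF
    rwa [pow_one] at h
  have hn : ((frobenius R p) ^ n).Finite := by
    induction n with
    | zero =>
      rw [pow_zero]
      exact RingHom.Finite.id R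
    | succ m ih =>
      rw [pow_succ]
      exact RingHom.Finite.comp ih h1
  exact hn

theorem uniformly_F_compatible_iff_fully_special (R : Type u) [CommRing R] [IsNoetherianRing R] [IsLocalRing R]
    (p : ℕ) [Fact p.Prime] [CharP R p]
    (E : Type u) [AddCommGroup E] [Module R E]
    (hE : Module.Injective R E)
    (ι : (R ⧸ maximalIdeal R) →ₗ[R] E) (hι : Function.Injective ι)
    (hess : ∀ N : Submodule R E, N ⊓ LinearMap.range ι = ⊥ → N = ⊥)
    (hFF : IsFFinite R p) (𝔟 : Ideal R) :
    UniformlyFCompatible R p 𝔟 ↔ IsFullyPhiSpecial R p E 𝔟 := by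
  constructor
  · intro hUF n hn r hr e he
    letI : Module.Finite R (FrobAlg R p n) := frobAlg_module_finite R p hFF n
    show FrobAlg.of R p n r ⊗ₜ[R] e = (0 : FrobAlg R p n ⊗[R] E)
    apply thetaMap_eq_zero (A := R) E (FrobAlg R p n) hE
    ext φ
    rw [thetaMap_tmul]
    exact he _ (hUF n hn φ r hr)
  · intro hFS n hn φ b hb
    by_contra ha
    obtain ⟨e, he𝔟, hae⟩ := exists_ann_smul_ne_zero E hE ι hι 𝔟 _ ha
    have h1 : (FrobAlg.of R p n b) ⊗ₜ[R] e = (0 : FrobAlg R p n ⊗[R] E) :=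
      hFS n hn b hb e he𝔟
    have h2 : thetaMap (A := R) E (FrobAlg R p n) ((FrobAlg.of R p n b) ⊗ₜ[R] e) φ
        = φ (FrobAlg.of R p n b) • e := rfl
    rw [h1] at h2
    simp only [map_zero, LinearMap.zero_apply] at h2
    exact hae h2.symm
end

section
/- Suppose R is F-finite and let R̂ be the 𝔪-adic completion of R. If 𝔆 is a uniformly F-compatible ideal of R̂, then the contraction 𝔆 ∩ R is a uniformly F-compatible ideal of R. -/
open TensorProduct IsLocalRing DirectSum

universe u v

/-! ### Auxiliary lemmas for the main theorem -/

theorem aux_add_pow_le {S : Type*} [CommRing S] (I J : Ideal S) :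
    ∀ c m k : ℕ, m + k ≤ c → (I + J) ^ (m + k) ≤ I ^ m + J ^ k := by
  intro c
  induction c with
  | zero =>
    intro m k h
    have hm : m = 0 := by omega
    have hk : k = 0 := by omega
    subst hm; subst hk
    simp [Ideal.one_eq_top]
  | succ c ih =>
    intro m k h
    match m, k with
    | 0, k =>
      rw [pow_zero, Ideal.one_eq_top, Ideal.add_eq_sup]
      exact le_trans le_top le_sup_left
    | m + 1, 0 =>
      rw [pow_zero (J), Ideal.one_eq_top, Ideal.add_eq_sup]
      exact le_trans le_top le_sup_right
    | m + 1, k + 1 =>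
      have e : (m + 1) + (k + 1) = (m + k + 1) + 1 := by ring
      rw [e, pow_succ, mul_add]
      have h1 : (I + J) ^ (m + k + 1) * I ≤ I ^ (m + 1) + J ^ (k + 1) := by
        calc (I + J) ^ (m + k + 1) * I
            ≤ (I ^ m + J ^ (k + 1)) * I := by
              apply Ideal.mul_mono_left
              have e2 : m + k + 1 = m + (k + 1) := by ring
              rw [e2]
              exact ih m (k + 1) (by omega)
          _ = I ^ m * I + J ^ (k + 1) * I := by rw [add_mul]
          _ ≤ I ^ (m + 1) + J ^ (k + 1) := by
              apply sup_le
              · rw [← pow_succ]; exact le_sup_left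
              · exact le_trans Ideal.mul_le_left le_sup_right
      have h2 : (I + J) ^ (m + k + 1) * J ≤ I ^ (m + 1) + J ^ (k + 1) := by
        calc (I + J) ^ (m + k + 1) * J
            ≤ (I ^ (m + 1) + J ^ k) * J := by
              apply Ideal.mul_mono_left
              have e2 : m + k + 1 = (m + 1) + k := by ring
              rw [e2]
              exact ih (m + 1) k (by omega)
          _ = I ^ (m + 1) * J + J ^ k * J := by rw [add_mul]
          _ ≤ I ^ (m + 1) + J ^ (k + 1) := by
              apply sup_le
              · exact le_trans Ideal.mul_le_left le_sup_left
              · rw [← pow_succ]; exact le_sup_right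
      exact sup_le h1 h2

theorem aux_span_pow {S : Type*} [CommRing S] (q : ℕ) (s : Finset S) :
    (Ideal.span (s : Set S)) ^ (s.card * q + 1) ≤ Ideal.span ((fun a => a ^ q) '' (s : Set S)) := by
  classical
  induction s using Finset.induction_on with
  | empty => simp
  | @insert a t hat ih =>
    rw [Finset.coe_insert, Ideal.span_insert, Finset.card_insert_of_notMem hat,
      Set.image_insert_eq, Ideal.span_insert]
    have e : (t.card + 1) * q + 1 = q + (t.card * q + 1) := by ring
    rw [e]
    calc (Ideal.span {a} ⊔ Ideal.span (t : Set S)) ^ (q + (t.card * q + 1))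
        ≤ Ideal.span {a} ^ q + Ideal.span (t : Set S) ^ (t.card * q + 1) :=
          aux_add_pow_le _ _ _ q (t.card * q + 1) le_rfl
      _ ≤ Ideal.span {a ^ q} ⊔ Ideal.span ((fun a => a ^ q) '' (t : Set S)) := by
          rw [Ideal.add_eq_sup, Ideal.span_singleton_pow]
          exact sup_le_sup le_rfl ih

theorem uniformly_F_compatible_comap_completion
    (R : Type u) [CommRing R] [IsNoetherianRing R] [IsLocalRing R]
    (p : ℕ) [Fact p.Prime] [CharP R p]
    (hFF : IsFFinite R p)
    (R' : Type u) [CommRing R'] [IsNoetherianRing R'] [IsLocalRing R'] [CharP R' p]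
    [Algebra R R']
    (hmax : maximalIdeal R' = (maximalIdeal R).map (algebraMap R R'))
    (hcomplete : IsAdicComplete (maximalIdeal R') R')
    (hquot : ∀ n : ℕ, Function.Bijective
      (Ideal.quotientMap ((maximalIdeal R ^ n).map (algebraMap R R')) (algebraMap R R')
        Ideal.le_comap_map))
    (𝔆 : Ideal R') (h𝔆 : UniformlyFCompatible R' p 𝔆) :
    UniformlyFCompatible R p (𝔆.comap (algebraMap R R')) := by
  classical
  intro n hn φ b hb
  set A := algebraMap R R' with hA
  set q := p ^ n with hq
  set 𝔪 := maximalIdeal R with h𝔪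
  set 𝔪' := maximalIdeal R' with h𝔪'
  -- descriptions of the Frobenius-twisted algebra maps
  have hfrobR : ∀ a : R, (algebraMap R (FrobAlg R p n)) a = FrobAlg.of R p n (a ^ q) := by
    intro a
    show (frobenius R p)^[n] a = a ^ q
    rw [hq]
    apply iterate_frobenius
  have hfrobR' : ∀ a : R', (algebraMap R' (FrobAlg R' p n)) a = FrobAlg.of R' p n (a ^ q) := by
    intro a
    show (frobenius R' p)^[n] a = a ^ q
    rw [hq]
    apply iterate_frobenius
  have hφmul : ∀ a t : R, φ (FrobAlg.of R p n (a ^ q * t)) = a * φ (FrobAlg.of R p n t) := by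
    intro a t
    have h1 : FrobAlg.of R p n (a ^ q * t) = a • FrobAlg.of R p n t := by
      rw [Algebra.smul_def, hfrobR]
      rfl
    rw [h1, map_smul, smul_eq_mul]
  have hφsub : ∀ a t : R,
      φ (FrobAlg.of R p n (a - t)) = φ (FrobAlg.of R p n a) - φ (FrobAlg.of R p n t) := by
    intro a t
    exact map_sub φ (FrobAlg.of R p n a) (FrobAlg.of R p n t)
  have hφadd : ∀ a t : R,
      φ (FrobAlg.of R p n (a + t)) = φ (FrobAlg.of R p n a) + φ (FrobAlg.of R p n t) := by
    intro a t
    exact map_add φ (FrobAlg.of R p n a) (FrobAlg.of R p n t)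
  -- continuity of φ
  have hcont : ∀ k : ℕ, ∃ N₀ : ℕ, ∀ s : R, s ∈ 𝔪 ^ N₀ → φ (FrobAlg.of R p n s) ∈ 𝔪 ^ k := by
    intro k
    obtain ⟨T, hT⟩ := IsNoetherian.noetherian (𝔪 ^ k)
    have hT' : Ideal.span (T : Set R) = 𝔪 ^ k := hT
    refine ⟨k * (T.card * q + 1), fun s hs => ?_⟩
    have h1 : s ∈ Ideal.span ((fun a => a ^ q) '' (T : Set R)) := by
      apply aux_span_pow q T
      have e : 𝔪 ^ (k * (T.card * q + 1)) = (Ideal.span (T : Set R)) ^ (T.card * q + 1) := by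
        rw [pow_mul, ← hT']
      exact e ▸ hs
    have key : ∀ x ∈ Ideal.span ((fun a => a ^ q) '' (T : Set R)),
        ∀ r : R, φ (FrobAlg.of R p n (r * x)) ∈ 𝔪 ^ k := by
      intro x hx
      induction hx using Submodule.span_induction with
      | mem x hxmem =>
        obtain ⟨a, haT, rfl⟩ := hxmem
        intro r
        rw [mul_comm, hφmul a r]
        have haM : a ∈ 𝔪 ^ k := by
          rw [← hT]
          exact Ideal.subset_span haT
        exact Ideal.mul_mem_right _ _ haM
      | zero =>
        intro r
        rw [mul_zero]
        have : φ (FrobAlg.of R p n 0) = 0 := map_zero φ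
        rw [this]
        exact zero_mem _
      | add x y hx hy ihx ihy =>
        intro r
        rw [mul_add, hφadd]
        exact add_mem (ihx r) (ihy r)
      | smul c x hx ihx =>
        intro r
        have e : r * (c • x) = (r * c) * x := by
          rw [smul_eq_mul]; ring
        rw [e]
        exact ihx (r * c)
    have := key s h1 1
    rwa [one_mul] at this
  choose Nf0 hNf0 using hcont
  -- a monotone dominating continuity scale
  let Nf : ℕ → ℕ := fun k => Nat.rec (Nf0 0) (fun k ih => max (Nf0 (k + 1)) (ih + 1)) k
  have hNfs : ∀ k, Nf (k + 1) = max (Nf0 (k + 1)) (Nf k + 1) := fun k => rfl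
  have hNf0le : ∀ k, Nf0 k ≤ Nf k := by
    intro k
    cases k with
    | zero => exact le_rfl
    | succ k => rw [hNfs]; exact le_max_left _ _
  have hNfmono : StrictMono Nf := by
    apply strictMono_nat_of_lt_succ
    intro k
    rw [hNfs]
    exact lt_of_lt_of_le (Nat.lt_succ_self _) (le_max_right _ _)
  have hkNf : ∀ k, k ≤ Nf k := fun k => hNfmono.le_apply
  have hNfapp : ∀ (k : ℕ) (s : R), s ∈ 𝔪 ^ Nf k → φ (FrobAlg.of R p n s) ∈ 𝔪 ^ k :=
    fun k s hs => hNf0 k s (Ideal.pow_le_pow_right (hNf0le k) hs)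
  -- approximation of elements of R' by elements of R
  have happrox : ∀ (x : R') (k : ℕ), ∃ s : R, x - A s ∈ (𝔪 ^ k).map A := by
    intro x k
    obtain ⟨y, hy⟩ := (hquot k).2 (Ideal.Quotient.mk _ x)
    obtain ⟨s, rfl⟩ := Ideal.Quotient.mk_surjective y
    rw [Ideal.quotientMap_mk] at hy
    refine ⟨s, ?_⟩
    have := Ideal.Quotient.eq.mp hy
    have := neg_mem this
    rwa [neg_sub] at this
  have hinj : ∀ (s : R) (k : ℕ), A s ∈ (𝔪 ^ k).map A → s ∈ 𝔪 ^ k := by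
    intro s k hs
    have h0 : (Ideal.quotientMap ((𝔪 ^ k).map A) A Ideal.le_comap_map)
        (Ideal.Quotient.mk (𝔪 ^ k) s) = (Ideal.quotientMap ((𝔪 ^ k).map A) A Ideal.le_comap_map)
        (Ideal.Quotient.mk (𝔪 ^ k) 0) := by
      rw [Ideal.quotientMap_mk, Ideal.quotientMap_mk, map_zero, map_zero,
        Ideal.Quotient.eq_zero_iff_mem]
      exact hs
    have := (hquot k).1 h0
    rw [map_zero] at this
    exact Ideal.Quotient.eq_zero_iff_mem.mp this
  choose g hg using fun (x : R') (k : ℕ) => happrox x (Nf k)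
  have hdiff : ∀ (x : R') {m k : ℕ}, m ≤ k → g x k - g x m ∈ 𝔪 ^ Nf m := by
    intro x m k hmk
    apply hinj
    have e : A (g x k - g x m) = (x - A (g x m)) - (x - A (g x k)) := by
      rw [map_sub]; ring
    rw [e]
    exact sub_mem (hg x m)
      (Ideal.map_mono (Ideal.pow_le_pow_right (hNfmono.monotone hmk)) (hg x k))
  have hmap_eq : ∀ k : ℕ, (𝔪 ^ k).map A = 𝔪' ^ k := by
    intro k
    rw [Ideal.map_pow, hmax]
  have hsmultop : ∀ I : Ideal R', (I • (⊤ : Submodule R' R') : Submodule R' R') = I := by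
    intro I
    apply le_antisymm
    · exact Submodule.smul_le.mpr fun i hi t _ => by
        simpa [smul_eq_mul] using I.mul_mem_right t hi
    · intro x hx
      simpa [smul_eq_mul] using Submodule.smul_mem_smul hx (Submodule.mem_top (x := (1 : R')))
  -- the Cauchy sequence and its limit
  have hcauchy : ∀ x : R', ∃ L : R', ∀ k,
      (A (φ (FrobAlg.of R p n (g x k)))) ≡ L [SMOD ((𝔪' ^ k • ⊤ : Submodule R' R'))] := by
    intro x
    apply IsPrecomplete.prec hcomplete.toIsPrecomplete
    intro m k hmk
    rw [SModEq.sub_mem, hsmultop]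
    have h1 : g x m - g x k ∈ 𝔪 ^ Nf m := by
      have := neg_mem (hdiff x hmk)
      rwa [neg_sub] at this
    have h2 : φ (FrobAlg.of R p n (g x m - g x k)) ∈ 𝔪 ^ m := hNfapp m _ h1
    have h3 : A (φ (FrobAlg.of R p n (g x m - g x k))) ∈ (𝔪 ^ m).map A :=
      Ideal.mem_map_of_mem A h2
    rw [hφsub, map_sub, hmap_eq] at h3
    exact h3
  choose ψ0 hψ0 using hcauchy
  have hψ0mem : ∀ (x : R') (k : ℕ), ψ0 x - A (φ (FrobAlg.of R p n (g x k))) ∈ 𝔪' ^ k := by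
    intro x k
    have := (hψ0 x k).symm
    rw [SModEq.sub_mem, hsmultop] at this
    exact this
  -- uniqueness of limits
  have huniq : ∀ x y : R',
      (∀ k : ℕ, ∃ s : R, x - A s ∈ (𝔪 ^ Nf k).map A ∧
        y - A (φ (FrobAlg.of R p n s)) ∈ 𝔪' ^ k) → y = ψ0 x := by
    intro x y hy
    have hH : IsHausdorff 𝔪' R' := hcomplete.toIsHausdorff
    have h0 : y - ψ0 x = 0 := by
      apply hH.haus
      intro k
      rw [SModEq.sub_mem, sub_zero, hsmultop]
      obtain ⟨s, hs1, hs2⟩ := hy k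
      have hmid : A (φ (FrobAlg.of R p n s)) - A (φ (FrobAlg.of R p n (g x k))) ∈ 𝔪' ^ k := by
        have hsg : s - g x k ∈ 𝔪 ^ Nf k := by
          apply hinj
          have e : A (s - g x k) = (x - A (g x k)) - (x - A s) := by
            rw [map_sub]; ring
          rw [e]
          exact sub_mem (hg x k) hs1
        have h2 : A (φ (FrobAlg.of R p n (s - g x k))) ∈ (𝔪 ^ k).map A :=
          Ideal.mem_map_of_mem A (hNfapp k _ hsg)
        rw [hφsub, map_sub, hmap_eq] at h2
        exact h2
      have e : y - ψ0 x = (y - A (φ (FrobAlg.of R p n s)))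
          + (A (φ (FrobAlg.of R p n s)) - A (φ (FrobAlg.of R p n (g x k))))
          + (A (φ (FrobAlg.of R p n (g x k))) - ψ0 x) := by ring
      rw [e]
      refine add_mem (add_mem hs2 hmid) ?_
      have := neg_mem (hψ0mem x k)
      rwa [neg_sub] at this
    exact sub_eq_zero.mp h0
  -- ψ0 agrees with φ on R
  have hψA : ∀ s : R, ψ0 (A s) = A (φ (FrobAlg.of R p n s)) := by
    intro s
    refine (huniq (A s) (A (φ (FrobAlg.of R p n s))) fun k => ⟨s, ?_, ?_⟩).symm
    · rw [sub_self]; exact zero_mem _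
    · rw [sub_self]; exact zero_mem _
  -- additivity
  have hadd : ∀ x y : R', ψ0 (x + y) = ψ0 x + ψ0 y := by
    intro x y
    refine (huniq (x + y) (ψ0 x + ψ0 y) fun k => ⟨g x k + g y k, ?_, ?_⟩).symm
    · have e : x + y - A (g x k + g y k) = (x - A (g x k)) + (y - A (g y k)) := by
        rw [map_add]; ring
      rw [e]
      exact add_mem (hg x k) (hg y k)
    · rw [hφadd, map_add]
      have e : ψ0 x + ψ0 y - (A (φ (FrobAlg.of R p n (g x k))) + A (φ (FrobAlg.of R p n (g y k))))
          = (ψ0 x - A (φ (FrobAlg.of R p n (g x k)))) + (ψ0 y - A (φ (FrobAlg.of R p n (g y k)))) := by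
        ring
      rw [e]
      exact add_mem (hψ0mem x k) (hψ0mem y k)
  -- semilinearity
  have hsmul : ∀ t x : R', ψ0 (t ^ q * x) = t * ψ0 x := by
    intro t x
    refine (huniq (t ^ q * x) (t * ψ0 x) fun k => ?_).symm
    obtain ⟨u, hu⟩ := happrox t (Nf k)
    refine ⟨u ^ q * g x k, ?_, ?_⟩
    · have e : t ^ q * x - A (u ^ q * g x k)
          = t ^ q * (x - A (g x k)) + (t ^ q - (A u) ^ q) * A (g x k) := by
        rw [map_mul, map_pow]; ring
      rw [e]
      apply add_mem
      · exact Ideal.mul_mem_left _ _ (hg x k)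
      · obtain ⟨c, hc⟩ := sub_dvd_pow_sub_pow t (A u) q
        rw [hc]
        exact Ideal.mul_mem_right _ _ (Ideal.mul_mem_right _ _ hu)
    · rw [hφmul u (g x k), map_mul]
      have e : t * ψ0 x - A u * A (φ (FrobAlg.of R p n (g x k)))
          = t * (ψ0 x - A (φ (FrobAlg.of R p n (g x k)))) + (t - A u) * A (φ (FrobAlg.of R p n (g x k))) := by
        ring
      rw [e]
      apply add_mem
      · exact Ideal.mul_mem_left _ _ (hψ0mem x k)
      · have h1 : t - A u ∈ 𝔪' ^ Nf k := by
          rw [← hmap_eq]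
          exact hu
        exact Ideal.mul_mem_right _ _ (Ideal.pow_le_pow_right (hkNf k) h1)
  -- assemble the R'-linear extension ψ
  let ψ : FrobAlg R' p n →ₗ[R'] R' :=
    { toFun := fun x => ψ0 x
      map_add' := fun x y => hadd x y
      map_smul' := by
        intro t x
        show ψ0 (t • x) = t * ψ0 x
        have e : (t • x : FrobAlg R' p n) = FrobAlg.of R' p n (t ^ q) * x := by
          rw [Algebra.smul_def, hfrobR']
        rw [e]
        exact hsmul t x }
  have hb' : A b ∈ 𝔆 := hb
  have hmem := h𝔆 n hn ψ (A b) hb'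
  have hval : ψ (FrobAlg.of R' p n (A b)) = ψ0 (A b) := rfl
  rw [hval, hψA b] at hmem
  exact hmem
end
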